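/- arXiv:2310.01364 — 6 statements merged into one kernel-verified Lean document; each statement's English description precedes it below -/
import Mathlib

section
/- Let f : ℝ^d → ℝ∪{+∞} be lower semicontinuous, quasiconvex, and continuous on the interior of its domain, and assume (H2) holds. Let x ∈ int(dom f) with f(x) > inf f, and let δ > 0 be such that B(x,δ) ⊂ dom f. Then bd([f ≤ f(x)]) ∩ B(x,δ) = [f = f(x)] ∩ B(x,δ), where bd denotes topological boundary. -/
open Filter Set Metric MeasureTheory
open scoped Topology ENNReal NNReal RealInnerProductSpace Pointwise

noncomputable section

abbrev Euc (d : ℕ) := EuclideanSpace ℝ (Fin d)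

/-- The metric slope `|∇f|(x)`, with value `+∞` outside of the domain of `f`. -/
def mslope {d : ℕ} (f : Euc d → EReal) (x : Euc d) : ℝ≥0∞ :=
  if f x = ⊤ then ⊤
  else Filter.limsup (fun y => ENNReal.ofReal ((max (f x - f y) 0).toReal / dist x y)) (𝓝[≠] x)

/-- The limiting slope `|∇f|⁻(x) = liminf_{y→x, f(y)→f(x)} |∇f|(y)`. -/
def limSlope {d : ℕ} (f : Euc d → EReal) (x : Euc d) : ℝ≥0∞ :=
  Filter.liminf (fun y => mslope f y) (𝓝 x ⊓ Filter.comap f (𝓝 (f x)))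

/-- Quasiconvexity for extended-real-valued functions. -/
def QuasiConvexE {d : ℕ} (f : Euc d → EReal) : Prop :=
  ∀ x y : Euc d, ∀ t : ℝ, 0 ≤ t → t ≤ 1 →
    f (t • x + (1 - t) • y) ≤ max (f x) (f y)

/-- Coercivity: every sublevel set below `sup f` is compact. -/
def CoerciveE {d : ℕ} (f : Euc d → EReal) : Prop :=
  ∀ α : ℝ, (α : EReal) < ⨆ x, f x → IsCompact {x : Euc d | f x ≤ (α : EReal)}

/-- Hypothesis (H1). -/
def HypH1 {d : ℕ} (f : Euc d → EReal) : Prop :=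
  CoerciveE f ∧
    ∀ α : ℝ, (⨅ x, f x) < (α : EReal) →
      (interior {x : Euc d | f x ≤ (α : EReal)}).Nonempty

/-- Hypothesis (H2): the slope is bounded away from zero around every non-minimizing
point of the domain. -/
def HypH2 {d : ℕ} (f : Euc d → EReal) : Prop :=
  ∀ x : Euc d, f x ≠ ⊤ → (∃ y, f y < f x) →
    ∃ δ : ℝ, 0 < δ ∧ ∃ ℓ : ℝ≥0∞, 0 < ℓ ∧
      ∀ y ∈ Metric.ball x δ, f y ≠ ⊤ → ℓ < mslope f y

/-- `r`-prox-regularity of a set: points at distance `< r` have a unique nearest point. -/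
def ProxRegularWith {d : ℕ} (r : ℝ) (S : Set (Euc d)) : Prop :=
  ∀ u : Euc d, 0 < Metric.infDist u S → Metric.infDist u S < r →
    ∃! y : Euc d, y ∈ S ∧ dist u y = Metric.infDist u S

/-- Hypothesis (H3). -/
def HypH3 {d : ℕ} (f : Euc d → EReal) : Prop :=
  ∀ α : ℝ, (⨅ x, f x) < (α : EReal) → (α : EReal) < (⨆ x, f x) →
    ∃ η : ℝ, 0 < η ∧ ∃ r : ℝ, 0 < r ∧
      ∀ β : ℝ, |β - α| < η →
        ProxRegularWith r (interior {x : Euc d | f x ≤ (β : EReal)})ᶜ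

/-- Normal cone to a convex set. -/
def normalConeCvx {d : ℕ} (S : Set (Euc d)) (x : Euc d) : Set (Euc d) :=
  {v : Euc d | ∀ y ∈ S, (inner ℝ v (y - x) : ℝ) ≤ 0}

/-- Proximal normal cone to a closed set. -/
def proxNormalCone {d : ℕ} (S : Set (Euc d)) (x : Euc d) : Set (Euc d) :=
  {v : Euc d | ∃ σ : ℝ, 0 < σ ∧ ∀ y ∈ S, (inner ℝ v (y - x) : ℝ) ≤ σ * ‖y - x‖ ^ 2}

open Classical in
/-- The extended-real-valued indicator function of a set. -/
def erealInd {d : ℕ} (C : Set (Euc d)) : Euc d → EReal :=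
  fun x => if x ∈ C then (0 : EReal) else ⊤

/-- The max-convolution `(f ⋄ g)(x) = inf_w max (f (x - w)) (g w)`. -/
def maxConv {d : ℕ} (f g : Euc d → EReal) (x : Euc d) : EReal :=
  ⨅ w : Euc d, max (f (x - w)) (g w)

/-- The regularization `f_ε = f ⋄ I_{ε𝔹}`, i.e. `f_ε x = inf_{w ∈ 𝔹} f (x - ε w)`. -/
def maxConvReg {d : ℕ} (f : Euc d → EReal) (ε : ℝ) (x : Euc d) : EReal :=
  ⨅ w ∈ Metric.closedBall (0 : Euc d) 1, f (x - ε • w)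

/-- The real-valued regularization of a real-valued function. -/
def regR {d : ℕ} (f : Euc d → ℝ) (ε : ℝ) (x : Euc d) : ℝ :=
  sInf ((fun w => f (x - ε • w)) '' Metric.closedBall (0 : Euc d) 1)

/-- `f` admits a steepest descent curve emanating from `x₀`: a 1-Lipschitz curve
`c : [0,T] → ℝ^d` with `c 0 = x₀` such that `(f ∘ c)'(t) = -|∇f|(c t)` for a.e. `t`. -/
def HasSteepestDescentCurveFrom {d : ℕ} (f : Euc d → EReal) (x₀ : Euc d) : Prop :=
  ∃ T : ℝ, 0 < T ∧ ∃ c : ℝ → Euc d,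
    LipschitzOnWith 1 c (Set.Icc 0 T) ∧ c 0 = x₀ ∧
    (∀ t ∈ Set.Icc (0 : ℝ) T, f (c t) ≠ ⊤) ∧
    ∀ᵐ t ∂(volume.restrict (Set.Icc (0 : ℝ) T)),
      mslope f (c t) ≠ ⊤ ∧
      HasDerivAt (fun s => (f (c s)).toReal) (-(mslope f (c t)).toReal) t


lemma slope_pos_mem_closure {d : ℕ} (f : Euc d → EReal) (v : Euc d) (hv : f v ≠ ⊤)
    {ℓ : ℝ≥0∞} (hℓ : 0 < ℓ) (hsl : ℓ < mslope f v) :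
    v ∈ closure {z | f z < f v} := by
  by_contra hcl
  rw [mem_closure_iff_nhds] at hcl
  push_neg at hcl
  obtain ⟨U, hU, hUe⟩ := hcl
  rw [Set.eq_empty_iff_forall_notMem] at hUe
  have hev : ∀ᶠ z in 𝓝[≠] v,
      ENNReal.ofReal ((max (f v - f z) 0).toReal / dist v z) ≤ 0 := by
    filter_upwards [nhdsWithin_le_nhds hU] with z hz
    have h1 : ¬ f z < f v := fun h => hUe z ⟨hz, h⟩
    have h2 : f v - f z ≤ 0 := EReal.sub_le_of_le_add (by rw [zero_add]; exact not_lt.mp h1)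
    rw [max_eq_right h2, EReal.toReal_zero, zero_div, ENNReal.ofReal_zero]
  have hle : mslope f v ≤ 0 := by
    rw [mslope, if_neg hv]
    exact Filter.limsup_le_of_le (by isBoundedDefault) hev
  exact absurd ((hℓ.trans hsl).trans_le hle) (lt_irrefl 0)

theorem statement0 {d : ℕ} (f : Euc d → EReal)
    (hne_bot : ∀ x, f x ≠ ⊥)
    (hlsc : LowerSemicontinuous f)
    (hqc : QuasiConvexE f)
    (hcont : ContinuousOn f (interior {x : Euc d | f x ≠ ⊤}))
    (hH2 : HypH2 f)
    (x : Euc d)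
    (hx : x ∈ interior {y : Euc d | f y ≠ ⊤})
    (hxinf : (⨅ y, f y) < f x)
    (δ : ℝ) (hδ : 0 < δ)
    (hball : Metric.ball x δ ⊆ {y : Euc d | f y ≠ ⊤}) :
    frontier {y : Euc d | f y ≤ f x} ∩ Metric.ball x δ
      = {y : Euc d | f y = f x} ∩ Metric.ball x δ := by
  set α := f x with hα
  set S : Set (Euc d) := {y : Euc d | f y ≤ α} with hS
  set C : Set (Euc d) := {y : Euc d | f y < α} with hC
  have hSclosed : IsClosed S := hlsc.isClosed_preimage α
  have hCconv : Convex ℝ C := by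
    intro a ha b hb s t hs ht hst
    have hmax := hqc a b s hs (by linarith)
    have hts : t = 1 - s := by linarith
    subst hts
    exact lt_of_le_of_lt hmax (max_lt ha hb)
  have hball_int : Metric.ball x δ ⊆ interior {y : Euc d | f y ≠ ⊤} :=
    (Metric.isOpen_ball).subset_interior_iff.mpr hball
  have hcontAt : ∀ v ∈ Metric.ball x δ, ContinuousAt f v := fun v hv =>
    hcont.continuousAt (isOpen_interior.mem_nhds (hball_int hv))
  ext y
  constructor
  · rintro ⟨hyf, hyb⟩
    refine ⟨?_, hyb⟩
    have hyS : y ∈ S := hSclosed.closure_eq ▸ (frontier_subset_closure hyf)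
    have hyS' : f y ≤ α := hyS
    rcases lt_or_eq_of_le hyS' with hlt | heq
    · exfalso
      have hnhds : S ∈ 𝓝 y := by
        filter_upwards [(hcontAt y hyb).preimage_mem_nhds (Iio_mem_nhds hlt)] with z hz
        exact le_of_lt (show f z < α from hz)
      rw [hSclosed.frontier_eq] at hyf
      exact hyf.2 (mem_interior_iff_mem_nhds.mpr hnhds)
    · exact heq
  · rintro ⟨hyα, hyb⟩
    have hyα : f y = α := hyα
    refine ⟨?_, hyb⟩
    rw [hSclosed.frontier_eq]
    refine ⟨le_of_eq hyα, fun hyint => ?_⟩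
    obtain ⟨ρ₀, hρ₀, hρ₀S⟩ := Metric.mem_nhds_iff.mp (mem_interior_iff_mem_nhds.mp hyint)
    set ρ := min ρ₀ (δ - dist y x) with hρdef
    have hρ : 0 < ρ := lt_min hρ₀ (by simpa [sub_pos] using (Metric.mem_ball.mp hyb))
    have hballS : Metric.ball y ρ ⊆ S := (Metric.ball_subset_ball (min_le_left _ _)).trans hρ₀S
    have hballδ : Metric.ball y ρ ⊆ Metric.ball x δ := by
      intro v hv
      have h1 : dist v y < δ - dist y x := lt_of_lt_of_le hv (min_le_right _ _)
      exact Metric.mem_ball.mpr (lt_of_le_of_lt (dist_triangle v y x) (by linarith))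
    have hclC : ∀ v ∈ Metric.ball y ρ, v ∈ closure C := by
      intro v hv
      have hvdom : f v ≠ ⊤ := hball (hballδ hv)
      have hvS : f v ≤ α := hballS hv
      rcases lt_or_eq_of_le hvS with h | h
      · exact subset_closure h
      · obtain ⟨d', hd', ℓ, hℓ, hsl⟩ := hH2 v hvdom
          (by obtain ⟨z, hz⟩ := iInf_lt_iff.mp hxinf; exact ⟨z, h ▸ hz⟩)
        have hvc := slope_pos_mem_closure f v hvdom hℓ (hsl v (Metric.mem_ball_self hd') hvdom)
        rwa [h] at hvc
    have hyclC : y ∈ closure C := hclC y (Metric.mem_ball_self hρ)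
    obtain ⟨z, hzb, hzC⟩ :=
      mem_closure_iff_nhds.mp hyclC _ (Metric.ball_mem_nhds y hρ)
    have hzC : f z < α := hzC
    have hzint : z ∈ interior C :=
      mem_interior_iff_mem_nhds.mpr
        ((hcontAt z (hballδ hzb)).preimage_mem_nhds (Iio_mem_nhds hzC))
    have hzy : dist y z ≠ 0 := by
      intro h0
      rw [dist_eq_zero] at h0
      rw [← h0, hyα] at hzC
      exact lt_irrefl _ hzC
    have hdpos : 0 < dist y z := lt_of_le_of_ne dist_nonneg (Ne.symm hzy)
    set t : ℝ := ρ / (2 * dist y z) with htdef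
    have ht : 0 < t := div_pos hρ (by positivity)
    set w : Euc d := y + t • (y - z) with hwdef
    have hwball : w ∈ Metric.ball y ρ := by
      rw [Metric.mem_ball, dist_eq_norm]
      have hwy : w - y = t • (y - z) := by rw [hwdef]; abel
      rw [hwy, norm_smul, Real.norm_eq_abs, abs_of_pos ht, ← dist_eq_norm]
      rw [htdef, div_mul_eq_mul_div, mul_comm (2:ℝ) (dist y z), ← div_div, mul_div_assoc,
        div_self hzy, mul_one]
      linarith
    have hwcl : w ∈ closure C := hclC w hwball
    have hseg : y ∈ openSegment ℝ z w := by
      refine ⟨t / (1 + t), 1 / (1 + t), by positivity, by positivity, ?_, ?_⟩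
      · rw [← add_div, add_comm t 1, div_self (by positivity : (0:ℝ) < 1 + t).ne']
      · rw [hwdef]
        have h1t : (1 + t) ≠ 0 := by positivity
        match_scalars <;> field_simp <;> ring
    have hyintC : y ∈ interior C :=
      hCconv.openSegment_interior_closure_subset_interior hzint hwcl hseg
    have hfin : y ∈ C := interior_subset hyintC
    have hfin2 : f y < α := hfin
    rw [hyα] at hfin2
    exact lt_irrefl _ hfin2

end
end

section
/- Let ε > 0, let Γ ⊂ ℝ^d be a Borel set with finite (d−1)-dimensional Hausdorff measure ℋ^{d−1}(Γ) < ∞, and let u : [0,ε] × Γ → ℝ^d be a bi-Lipschitz map, i.e. there exist constants 0 < c ≤ C such that c·(|t₁−t₂| + ‖γ₁−γ₂‖) ≤ ‖u(t₁,γ₁) − u(t₂,γ₂)‖ ≤ C·(|t₁−t₂| + ‖γ₁−γ₂‖) for all t₁,t₂ ∈ [0,ε] and γ₁,γ₂ ∈ Γ. Then for every Lebesgue-null set 𝒩 ⊂ ℝ^d, there is a set A ⊂ Γ with ℋ^{d−1}(A) = ℋ^{d−1}(Γ) such that for every γ ∈ A the set {t ∈ [0,ε] : u(t,γ) ∈ 𝒩}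 has one-dimensional Lebesgue measure zero. -/
open Filter Set Metric MeasureTheory
open scoped Topology ENNReal NNReal RealInnerProductSpace Pointwise

noncomputable section

/-- Scale-`r` pre-Hausdorff measure. -/
def preH {X : Type*} [EMetricSpace X] (s : ℝ) (r : ℝ≥0∞) (A : Set X) : ℝ≥0∞ :=
  ⨅ (t : ℕ → Set X) (_ : A ⊆ ⋃ n, t n) (_ : ∀ n, EMetric.diam (t n) ≤ r),
    ∑' n, ⨆ _ : (t n).Nonempty, EMetric.diam (t n) ^ s

lemma preH_anti {X : Type*} [EMetricSpace X] (s : ℝ) {r₁ r₂ : ℝ≥0∞} (h : r₁ ≤ r₂)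
    (A : Set X) : preH s r₂ A ≤ preH s r₁ A := by
  refine le_iInf fun t => le_iInf fun ht => le_iInf fun hd => ?_
  exact iInf_le_of_le t (iInf_le_of_le ht (iInf_le_of_le (fun n => (hd n).trans h) le_rfl))

lemma preH_le_of_cover {X : Type*} [EMetricSpace X] {s : ℝ} {r : ℝ≥0∞} {A : Set X}
    (t : ℕ → Set X) (ht : A ⊆ ⋃ n, t n) (hd : ∀ n, EMetric.diam (t n) ≤ r) :
    preH s r A ≤ ∑' n, ⨆ _ : (t n).Nonempty, EMetric.diam (t n) ^ s :=
  iInf_le_of_le t (iInf_le_of_le ht (iInf_le_of_le hd le_rfl))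

lemma exists_cover_of_preH_lt {X : Type*} [EMetricSpace X] {s : ℝ} {r : ℝ≥0∞} {A : Set X}
    {ε : ℝ≥0∞} (h : preH s r A < ε) :
    ∃ t : ℕ → Set X, A ⊆ ⋃ n, t n ∧ (∀ n, EMetric.diam (t n) ≤ r) ∧
      ∑' n, (⨆ _ : (t n).Nonempty, EMetric.diam (t n) ^ s) < ε := by
  rw [preH] at h
  obtain ⟨t, ht⟩ := iInf_lt_iff.1 h
  obtain ⟨h1, ht⟩ := iInf_lt_iff.1 ht
  obtain ⟨h2, ht⟩ := iInf_lt_iff.1 ht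
  exact ⟨t, h1, h2, ht⟩

lemma hausdorffMeasure_eq_iSup_preH {X : Type*} [EMetricSpace X] [MeasurableSpace X]
    [BorelSpace X] (s : ℝ) (A : Set X) :
    μH[s] A = ⨆ (r : ℝ≥0∞) (_ : 0 < r), preH s r A :=
  MeasureTheory.Measure.hausdorffMeasure_apply s A

lemma vol_bad_null {X : Type*} [EMetricSpace X] [MeasurableSpace X] [BorelSpace X]
    [SecondCountableTopology X]
    {s : ℝ} (hs : 0 ≤ s) {E : Set (ℝ × X)} (hE : μH[s + 1] E = 0)
    {r β : ℝ≥0∞} (hr : 0 < r) (hrt : r ≠ ⊤) (hβ0 : β ≠ 0) (hβt : β ≠ ⊤) :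
    volume {a : ℝ | β < preH s r {x : X | (a, x) ∈ E}} = 0 := by
  classical
  refine le_antisymm (ENNReal.le_of_forall_pos_le_add fun η hη _ => ?_) zero_le
  rw [zero_add]
  -- preH (s+1) r E = 0
  have h0 : preH (s + 1) r E = 0 := by
    rw [hausdorffMeasure_eq_iSup_preH] at hE
    exact le_antisymm ((le_iSup₂ (f := fun r (_ : 0 < r) => preH (s + 1) r E) r hr).trans hE.le)
      zero_le
  have hβη : (0 : ℝ≥0∞) < β * η := by
    refine ENNReal.mul_pos hβ0 ?_
    simpa using hη.ne'
  obtain ⟨t, hcov, hdiam, hsum⟩ := exists_cover_of_preH_lt (h0 ▸ hβη)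
  set g : ℝ → ℝ≥0∞ := fun a =>
    ∑' n, (closure (Prod.fst '' t n)).indicator
      (fun _ => ⨆ _ : (t n).Nonempty, EMetric.diam (t n) ^ s) a with hg
  have hgmeas : Measurable g :=
    Measurable.ennreal_tsum fun n =>
      Measurable.indicator measurable_const isClosed_closure.measurableSet
  have hint : ∫⁻ a, g a ≤ β * η := by
    rw [hg]
    rw [lintegral_tsum fun n =>
      (Measurable.indicator measurable_const isClosed_closure.measurableSet).aemeasurable]
    refine le_trans (ENNReal.tsum_le_tsum fun n => ?_) hsum.le
    rw [lintegral_indicator_const isClosed_closure.measurableSet]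
    rcases (t n).eq_empty_or_nonempty with he | hne
    · simp [he]
    · simp only [iSup_pos hne]
      have hv : volume (closure (Prod.fst '' t n)) ≤ EMetric.diam (t n) := by
        refine (Real.volume_le_diam _).trans ?_
        rw [EMetric.diam_closure]
        simpa [EMetric.diam] using LipschitzWith.ediam_image_le (LipschitzWith.prod_fst) (t n)
      calc EMetric.diam (t n) ^ s * volume (closure (Prod.fst '' t n))
          ≤ EMetric.diam (t n) ^ s * EMetric.diam (t n) := mul_le_mul_right hv _
        _ ≤ EMetric.diam (t n) ^ (s + 1) := by
            rcases eq_or_ne (EMetric.diam (t n)) 0 with h0' | h0'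
            · simp [h0', ENNReal.zero_rpow_of_pos (by linarith : (0:ℝ) < s + 1)]
            · rw [ENNReal.rpow_add s 1 h0' (((hdiam n).trans_lt hrt.lt_top).ne),
                ENNReal.rpow_one]
  have hsub : {a : ℝ | β < preH s r {x : X | (a, x) ∈ E}} ⊆ {a : ℝ | β ≤ g a} := by
    intro a ha
    simp only [mem_setOf_eq] at ha ⊢
    refine le_of_lt (lt_of_lt_of_le ha ?_)
    set t' : ℕ → Set X := fun n =>
      if a ∈ closure (Prod.fst '' t n) then Prod.snd '' t n else ∅ with ht'
    have hcov' : {x : X | (a, x) ∈ E} ⊆ ⋃ n, t' n := by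
      intro x hx
      obtain ⟨_, ⟨n, rfl⟩, hn⟩ := hcov hx
      refine mem_iUnion.2 ⟨n, ?_⟩
      have ha' : a ∈ closure (Prod.fst '' t n) := subset_closure ⟨(a, x), hn, rfl⟩
      rw [ht']
      simp only [if_pos ha']
      exact ⟨(a, x), hn, rfl⟩
    have hdiam' : ∀ n, EMetric.diam (t' n) ≤ r := by
      intro n
      rw [ht']
      dsimp only
      split_ifs
      · exact le_trans (by simpa [EMetric.diam] using LipschitzWith.ediam_image_le LipschitzWith.prod_snd (t n))
          (hdiam n)
      · simp [EMetric.diam]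
    refine (preH_le_of_cover t' hcov' hdiam').trans (ENNReal.tsum_le_tsum fun n => ?_)
    by_cases hmem : a ∈ closure (Prod.fst '' t n)
    · simp only [ht', if_pos hmem, indicator_of_mem hmem]
      refine iSup_le fun hne => ?_
      have hne' : (t n).Nonempty := by
        obtain ⟨y, p, hp, rfl⟩ := hne
        exact ⟨p, hp⟩
      refine le_trans ?_ (le_iSup _ hne')
      exact ENNReal.rpow_le_rpow
        (by simpa [EMetric.diam] using LipschitzWith.ediam_image_le LipschitzWith.prod_snd (t n)) hs
    · simp [ht', if_neg hmem, indicator_of_notMem hmem, Set.not_nonempty_empty]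
  calc volume {a : ℝ | β < preH s r {x : X | (a, x) ∈ E}}
      ≤ volume {a : ℝ | β ≤ g a} := measure_mono hsub
    _ ≤ η := by
        have h1 : β * volume {a : ℝ | β ≤ g a} ≤ ∫⁻ a, g a :=
          mul_meas_ge_le_lintegral₀ hgmeas.aemeasurable β
        have h2 : β * volume {a : ℝ | β ≤ g a} ≤ β * η := h1.trans hint
        exact (ENNReal.mul_le_mul_iff_right hβ0 hβt).1 h2

lemma ae_slice_null {X : Type*} [EMetricSpace X] [MeasurableSpace X] [BorelSpace X]
    [SecondCountableTopology X] {s : ℝ} (hs : 0 ≤ s) {E : Set (ℝ × X)}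
    (hE : μH[s + 1] E = 0) :
    ∀ᵐ a : ℝ, μH[s] {x : X | (a, x) ∈ E} = 0 := by
  have key : ∀ k m : ℕ,
      volume {a : ℝ | ((m + 1 : ℕ) : ℝ≥0∞)⁻¹ <
        preH s ((k + 1 : ℕ) : ℝ≥0∞)⁻¹ {x : X | (a, x) ∈ E}} = 0 := by
    intro k m
    refine vol_bad_null hs hE ?_ ?_ ?_ ?_
    · simp
    · simp
    · simp
    · simp
  rw [ae_iff]
  refine measure_mono_null ?_
    (measure_iUnion_null fun k => measure_iUnion_null fun m => key k m)
  intro a ha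
  simp only [mem_setOf_eq] at ha
  by_contra hnot
  simp only [mem_iUnion, mem_setOf_eq, not_exists, not_lt] at hnot
  apply ha
  have hpre : ∀ k : ℕ, preH s ((k + 1 : ℕ) : ℝ≥0∞)⁻¹ {x : X | (a, x) ∈ E} = 0 := by
    intro k
    by_contra h0
    obtain ⟨m, hm⟩ := ENNReal.exists_inv_nat_lt h0
    have hmono : ((m + 1 : ℕ) : ℝ≥0∞)⁻¹ ≤ ((m : ℕ) : ℝ≥0∞)⁻¹ := by
      refine ENNReal.inv_le_inv.2 ?_
      exact_mod_cast Nat.le_succ m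
    exact absurd (hnot k m) (not_le.2 (lt_of_le_of_lt hmono hm))
  rw [hausdorffMeasure_eq_iSup_preH]
  refine le_antisymm (iSup₂_le fun r hr => ?_) zero_le
  obtain ⟨k, hk⟩ := ENNReal.exists_inv_nat_lt hr.ne'
  rcases k with _ | k
  · exact absurd hk (by simp)
  · calc preH s r {x : X | (a, x) ∈ E}
        ≤ preH s ((k + 1 : ℕ) : ℝ≥0∞)⁻¹ {x : X | (a, x) ∈ E} :=
          preH_anti s hk.le _
      _ = 0 := hpre k

lemma hausdorff_null_of_volume_null {d : ℕ} {N : Set (Euc d)} (h : volume N = 0) :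
    μH[(d : ℝ)] N = 0 := by
  have hr : ((d : ℝ)) = ((Module.finrank ℝ (Euc d) : ℕ) : ℝ) := by
    simp [finrank_euclideanSpace_fin]
  rw [hr, MeasureTheory.Measure.isAddLeftInvariant_eq_smul
    (μH[((Module.finrank ℝ (Euc d) : ℕ) : ℝ)]) (volume : Measure (Euc d))]
  simp [h]

theorem statement7 {d : ℕ} (ε : ℝ) (hε : 0 < ε)
    (Γ : Set (Euc d)) (hΓmeas : MeasurableSet Γ)
    (hΓfin : μH[(d : ℝ) - 1] Γ < ⊤)
    (u : ℝ → Euc d → Euc d) (c C : ℝ) (hc : 0 < c) (hcC : c ≤ C)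
    (hbil : ∀ t₁ ∈ Set.Icc (0 : ℝ) ε, ∀ t₂ ∈ Set.Icc (0 : ℝ) ε, ∀ γ₁ ∈ Γ, ∀ γ₂ ∈ Γ,
      c * (|t₁ - t₂| + ‖γ₁ - γ₂‖) ≤ ‖u t₁ γ₁ - u t₂ γ₂‖ ∧
      ‖u t₁ γ₁ - u t₂ γ₂‖ ≤ C * (|t₁ - t₂| + ‖γ₁ - γ₂‖))
    (N : Set (Euc d)) (hN : volume N = 0) :
    ∃ A ⊆ Γ, μH[(d : ℝ) - 1] A = μH[(d : ℝ) - 1] Γ ∧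
      ∀ γ ∈ A, volume {t ∈ Set.Icc (0 : ℝ) ε | u t γ ∈ N} = 0 := by
  rcases Γ.eq_empty_or_nonempty with hΓe | ⟨γ₀, hγ₀⟩
  · exact ⟨∅, by simp [hΓe], by simp [hΓe], by simp⟩
  have hCpos : 0 < C := hc.trans_le hcC
  have hd : 1 ≤ d := by
    by_contra hd0
    have hd0' : d = 0 := by omega
    subst hd0'
    have h1 := (hbil ε ⟨hε.le, le_rfl⟩ 0 ⟨le_rfl, hε.le⟩ γ₀ hγ₀ γ₀ hγ₀).1
    have h2 : u ε γ₀ - u 0 γ₀ = 0 := Subsingleton.elim _ _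
    rw [h2, norm_zero, sub_self, norm_zero, sub_zero, abs_of_pos hε, add_zero] at h1
    nlinarith
  set s : ℝ := (d : ℝ) - 1 with hsdef
  have hs : 0 ≤ s := by
    have : (1 : ℝ) ≤ (d : ℝ) := by exact_mod_cast hd
    linarith
  have hs1 : s + 1 = (d : ℝ) := by ring
  set N' := toMeasurable volume N with hN'def
  have hN' : volume N' = 0 := by rwa [measure_toMeasurable]
  have hNsub : N ⊆ N' := subset_toMeasurable _ _
  have hN'meas : MeasurableSet N' := measurableSet_toMeasurable _ _
  set S : Set (ℝ × Euc d) := (Set.Icc 0 ε) ×ˢ Γ with hSdef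
  have hSmeas : MeasurableSet S := measurableSet_Icc.prod hΓmeas
  set v : ℝ × Euc d → Euc d := fun p => u p.1 p.2 with hvdef
  set E : Set (ℝ × Euc d) := {p ∈ S | v p ∈ N'} with hEdef
  have hES : E ⊆ S := fun p hp => hp.1
  -- Lipschitz bound on S
  have hvLip : LipschitzWith (2 * C).toNNReal (S.restrict v) := by
    refine LipschitzWith.of_dist_le_mul fun p q => ?_
    obtain ⟨hp1, hp2⟩ : (p : ℝ × Euc d).1 ∈ Set.Icc (0:ℝ) ε ∧ (p : ℝ × Euc d).2 ∈ Γ := p.2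
    obtain ⟨hq1, hq2⟩ : (q : ℝ × Euc d).1 ∈ Set.Icc (0:ℝ) ε ∧ (q : ℝ × Euc d).2 ∈ Γ := q.2
    have hb := (hbil _ hp1 _ hq1 _ hp2 _ hq2).2
    have hd1 : |(p : ℝ × Euc d).1 - (q : ℝ × Euc d).1| ≤ dist (p : ℝ × Euc d) (q : ℝ × Euc d) := by
      rw [Prod.dist_eq]
      exact le_trans (le_of_eq (Real.dist_eq _ _).symm) (le_max_left _ _)
    have hd2 : ‖(p : ℝ × Euc d).2 - (q : ℝ × Euc d).2‖ ≤ dist (p : ℝ × Euc d) (q : ℝ × Euc d) := by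
      rw [Prod.dist_eq]
      exact le_trans (le_of_eq (dist_eq_norm _ _).symm) (le_max_right _ _)
    calc dist (S.restrict v p) (S.restrict v q)
        = ‖u (p : ℝ × Euc d).1 (p : ℝ × Euc d).2 - u (q : ℝ × Euc d).1 (q : ℝ × Euc d).2‖ :=
          dist_eq_norm _ _
      _ ≤ C * (|(p : ℝ × Euc d).1 - (q : ℝ × Euc d).1| + ‖(p : ℝ × Euc d).2 - (q : ℝ × Euc d).2‖) := hb
      _ ≤ C * (dist (p : ℝ × Euc d) (q : ℝ × Euc d) + dist (p : ℝ × Euc d) (q : ℝ × Euc d)) := by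
          apply mul_le_mul_of_nonneg_left (add_le_add hd1 hd2) hCpos.le
      _ = 2 * C * dist (p : ℝ × Euc d) (q : ℝ × Euc d) := by ring
      _ = ((2 * C).toNNReal : ℝ) * dist p q := by
          rw [Real.coe_toNNReal _ (by positivity), Subtype.dist_eq]
  have hEmeas : MeasurableSet E := by
    have : E = Subtype.val '' (S.restrict v ⁻¹' N') := by
      ext p
      constructor
      · rintro ⟨hpS, hpv⟩
        exact ⟨⟨p, hpS⟩, hpv, rfl⟩
      · rintro ⟨⟨q, hqS⟩, hqv, rfl⟩
        exact ⟨hqS, hqv⟩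
    rw [this]
    exact MeasurableSet.subtype_image hSmeas (hvLip.continuous.measurable hN'meas)
  -- anti-Lipschitz estimate on E
  have hanti : ∀ p ∈ E, ∀ q ∈ E, dist p q ≤ c⁻¹ * dist (v p) (v q) := by
    intro p hp q hq
    have hpS := hES hp
    have hqS := hES hq
    rw [hSdef, Set.mem_prod] at hpS hqS
    have hb := (hbil _ hpS.1 _ hqS.1 _ hpS.2 _ hqS.2).1
    have h1 : dist p q ≤ |p.1 - q.1| + ‖p.2 - q.2‖ := by
      rw [Prod.dist_eq]
      refine max_le ?_ ?_
      · rw [Real.dist_eq]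
        nlinarith [norm_nonneg (p.2 - q.2), abs_nonneg (p.1 - q.1)]
      · rw [dist_eq_norm]
        nlinarith [norm_nonneg (p.2 - q.2), abs_nonneg (p.1 - q.1)]
    calc dist p q ≤ |p.1 - q.1| + ‖p.2 - q.2‖ := h1
      _ ≤ c⁻¹ * (c * (|p.1 - q.1| + ‖p.2 - q.2‖)) := by
          rw [inv_mul_cancel_left₀ hc.ne']
      _ ≤ c⁻¹ * ‖v p - v q‖ := by
          apply mul_le_mul_of_nonneg_left hb (by positivity)
      _ = c⁻¹ * dist (v p) (v q) := by rw [dist_eq_norm]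
  have hinj : Set.InjOn v E := by
    intro p hp q hq hpq
    have := hanti p hp q hq
    rw [hpq, dist_self, mul_zero] at this
    exact dist_le_zero.1 this
  -- Hausdorff measure of E is zero
  have hvE : v '' E ⊆ N' := by
    rintro _ ⟨p, hp, rfl⟩
    exact hp.2
  have hvE0 : μH[(d : ℝ)] (v '' E) = 0 :=
    measure_mono_null hvE (hausdorff_null_of_volume_null hN')
  have hgl : LipschitzOnWith (c⁻¹).toNNReal (Function.invFunOn v E) (v '' E) := by
    rw [lipschitzOnWith_iff_dist_le_mul]
    rintro _ ⟨p, hp, rfl⟩ _ ⟨q, hq, rfl⟩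
    have h1 : Function.invFunOn v E (v p) = p := hinj (Function.invFunOn_apply_mem hp) hp
      (Function.invFunOn_apply_eq hp)
    have h2 : Function.invFunOn v E (v q) = q := hinj (Function.invFunOn_apply_mem hq) hq
      (Function.invFunOn_apply_eq hq)
    rw [h1, h2, Real.coe_toNNReal _ (by positivity)]
    exact hanti p hp q hq
  have hE0 : μH[s + 1] E = 0 := by
    rw [hs1]
    have hEsub : E ⊆ Function.invFunOn v E '' (v '' E) := by
      intro p hp
      exact ⟨v p, ⟨p, hp, rfl⟩, hinj (Function.invFunOn_apply_mem hp) hp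
        (Function.invFunOn_apply_eq hp)⟩
    refine measure_mono_null hEsub ?_
    refine le_antisymm (le_trans (hgl.hausdorffMeasure_image_le (by positivity)) ?_) zero_le
    rw [hvE0, mul_zero]
  -- slicing
  have hae := ae_slice_null hs hE0
  set ν : Measure (Euc d) := μH[s].restrict Γ with hνdef
  haveI : IsFiniteMeasure ν := ⟨by rw [hνdef, Measure.restrict_apply_univ]; exact hΓfin⟩
  have hprod : ((volume.restrict (Set.Icc (0:ℝ) ε)).prod ν) E = 0 := by
    rw [Measure.prod_apply hEmeas]
    have hae' : ∀ᵐ a ∂(volume.restrict (Set.Icc (0:ℝ) ε)), ν (Prod.mk a ⁻¹' E) = 0 := by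
      refine ae_restrict_of_ae (hae.mono fun a ha => ?_)
      have hrw : ν (Prod.mk a ⁻¹' E) = μH[s] ((Prod.mk a ⁻¹' E) ∩ Γ) :=
        Measure.restrict_apply' hΓmeas
      rw [hrw]
      exact measure_mono_null (fun x hx => hx.1) ha
    exact (lintegral_eq_zero_iff (measurable_measure_prodMk_left hEmeas)).2 hae'
  have hswap : ((ν.prod (volume.restrict (Set.Icc (0:ℝ) ε)))) (Prod.swap ⁻¹' E) = 0 := by
    rw [← Measure.prod_swap, Measure.map_apply measurable_swap (measurable_swap hEmeas)]
    simpa [Set.preimage_preimage] using hprod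
  have hae2 := MeasureTheory.Measure.measure_ae_null_of_prod_null hswap
  rw [Filter.EventuallyEq, ae_iff] at hae2
  set B : Set (Euc d) :=
    {γ | ¬ (volume.restrict (Set.Icc (0:ℝ) ε)) {t : ℝ | (t, γ) ∈ E} = 0} with hBdef
  have hB : ν B = 0 := by
    refine measure_mono_null ?_ hae2
    intro γ hγ
    simp only [hBdef, mem_setOf_eq, Measure.restrict_apply' measurableSet_Icc] at hγ
    simp only [mem_setOf_eq, Pi.zero_apply, Measure.restrict_apply' measurableSet_Icc]
    exact hγ
  have hBΓ : μH[s] (B ∩ Γ) = 0 := by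
    rw [← Measure.restrict_apply' hΓmeas]
    exact hB
  refine ⟨Γ \ B, Set.diff_subset, ?_, ?_⟩
  · refine le_antisymm (measure_mono Set.diff_subset) ?_
    calc μH[s] Γ ≤ μH[s] ((Γ \ B) ∪ (B ∩ Γ)) := by
          refine measure_mono fun γ hγ => ?_
          by_cases hγB : γ ∈ B
          · exact Or.inr ⟨hγB, hγ⟩
          · exact Or.inl ⟨hγ, hγB⟩
      _ ≤ μH[s] (Γ \ B) + μH[s] (B ∩ Γ) := measure_union_le _ _
      _ = μH[s] (Γ \ B) := by rw [hBΓ, add_zero]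
  · intro γ hγ
    have hγΓ : γ ∈ Γ := hγ.1
    have hγB : (volume.restrict (Set.Icc (0:ℝ) ε)) {t : ℝ | (t, γ) ∈ E} = 0 :=
      not_not.1 hγ.2
    rw [Measure.restrict_apply' measurableSet_Icc] at hγB
    refine measure_mono_null ?_ hγB
    intro t ht
    exact ⟨⟨⟨ht.1, hγΓ⟩, hNsub ht.2⟩, ht.1⟩

end
end

section
/- Let f : ℝ^d → ℝ∪{+∞} be lower semicontinuous with min f = 0 attained, let ε > 0, and let f_ε(x) := inf_{w∈𝔹} f(x − εw), where 𝔹 is the closed unit ball of ℝ^d. Then for every α ≥ 0, the sublevel set satisfies [f_ε ≤ α] = [f ≤ α] + ε𝔹 (Minkowski sum). -/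
open Filter Set Metric MeasureTheory
open scoped Topology ENNReal NNReal RealInnerProductSpace Pointwise

noncomputable section

theorem statement9 {d : ℕ} (f : Euc d → EReal)
    (hne_bot : ∀ x, f x ≠ ⊥)
    (hlsc : LowerSemicontinuous f)
    (hmin : ∃ x₀ : Euc d, f x₀ = 0 ∧ ∀ x, (0 : EReal) ≤ f x)
    (ε : ℝ) (hε : 0 < ε)
    (α : ℝ) (hα : 0 ≤ α) :
    {x : Euc d | maxConvReg f ε x ≤ (α : EReal)}
      = {x : Euc d | f x ≤ (α : EReal)} + Metric.closedBall (0 : Euc d) ε := by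
  ext x
  simp only [Set.mem_setOf_eq, Set.mem_add]
  constructor
  · intro hx
    set S : ℕ → Set (Euc d) := fun n =>
      {w ∈ Metric.closedBall (0 : Euc d) 1 |
        f (x - ε • w) ≤ ((α + 1 / (n + 1) : ℝ) : EReal)} with hS
    have hmap : Continuous fun w : Euc d => x - ε • w :=
      continuous_const.sub (continuous_id.const_smul ε)
    have hSclosed : ∀ n, IsClosed (S n) := by
      intro n
      have : S n = Metric.closedBall (0 : Euc d) 1 ∩
          (fun w : Euc d => x - ε • w) ⁻¹' (f ⁻¹' Set.Iic ((α + 1 / (n + 1) : ℝ) : EReal)) := by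
        ext w; simp [hS, Set.mem_setOf_eq]
      rw [this]
      exact Metric.isClosed_closedBall.inter
        ((hlsc.isClosed_preimage _).preimage hmap)
    have hSne : ∀ n, (S n).Nonempty := by
      intro n
      have hlt : maxConvReg f ε x < ((α + 1 / (n + 1) : ℝ) : EReal) := by
        refine lt_of_le_of_lt hx ?_
        exact_mod_cast lt_add_of_pos_right α (by positivity)
      rw [maxConvReg, iInf_lt_iff] at hlt
      obtain ⟨w, hw⟩ := hlt
      rw [iInf_lt_iff] at hw
      obtain ⟨hwB, hwlt⟩ := hw
      exact ⟨w, hwB, hwlt.le⟩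
    have hSmono : ∀ n, S (n + 1) ⊆ S n := by
      intro n w hw
      refine ⟨hw.1, hw.2.trans ?_⟩
      have : (α + 1 / (↑(n + 1) + 1) : ℝ) ≤ α + 1 / (↑n + 1) := by
        have h1 : (0:ℝ) < ↑n + 1 := by positivity
        have h2 : (↑n + 1 : ℝ) ≤ ↑(n+1) + 1 := by push_cast; linarith
        gcongr
      exact_mod_cast this
    have hcompact : IsCompact (S 0) :=
      (isCompact_closedBall (0 : Euc d) 1).of_isClosed_subset (hSclosed 0)
        (fun w hw => hw.1)
    obtain ⟨w₀, hw₀⟩ :=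
      IsCompact.nonempty_iInter_of_sequence_nonempty_isCompact_isClosed S hSmono hSne
        hcompact hSclosed
    simp only [Set.mem_iInter] at hw₀
    have hw₀B : w₀ ∈ Metric.closedBall (0 : Euc d) 1 := (hw₀ 0).1
    have hfle : f (x - ε • w₀) ≤ (α : EReal) := by
      have hne_top : f (x - ε • w₀) ≠ ⊤ := by
        intro h
        have h2 := (hw₀ 0).2
        rw [h, top_le_iff] at h2
        exact EReal.coe_ne_top _ h2
      set v := (f (x - ε • w₀)).toReal with hv
      have hveq : f (x - ε • w₀) = (v : EReal) := (EReal.coe_toReal hne_top (hne_bot _)).symm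
      rw [hveq]
      rw [EReal.coe_le_coe_iff]
      refine le_of_forall_pos_le_add fun δ hδ => ?_
      obtain ⟨n, hn⟩ := exists_nat_one_div_lt hδ
      have h2 := (hw₀ n).2
      rw [hveq, EReal.coe_le_coe_iff] at h2
      linarith
    refine ⟨x - ε • w₀, hfle, ε • w₀, ?_, by abel⟩
    rw [mem_closedBall_zero_iff] at hw₀B ⊢
    rw [norm_smul, Real.norm_of_nonneg hε.le]
    nlinarith
  · rintro ⟨y, hy, b, hb, rfl⟩
    have hwB : ε⁻¹ • b ∈ Metric.closedBall (0 : Euc d) 1 := by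
      rw [mem_closedBall_zero_iff] at hb ⊢
      rw [norm_smul, Real.norm_of_nonneg (inv_nonneg.2 hε.le)]
      rw [inv_mul_le_iff₀ hε]  -- maybe name differs
      linarith
    have : y + b - ε • (ε⁻¹ • b) = y := by
      rw [smul_smul, mul_inv_cancel₀ hε.ne', one_smul]; abel
    calc maxConvReg f ε (y + b) ≤ f (y + b - ε • (ε⁻¹ • b)) := biInf_le _ hwB
      _ = f y := by rw [this]
      _ ≤ (α : EReal) := hy


end
end

section
/- Let C ⊂ ℝ^d be a nonempty closed convex set and ε > 0. Then the closed set U := ℝ^d \ int(C + ε𝔹), where 𝔹 is the closed unit ball, is ε-prox-regular: every point x ∈ ℝ^d with 0 < d(x,U) < ε has a unique nearest point in U. -/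
open Filter Set Metric MeasureTheory
open scoped Topology ENNReal NNReal RealInnerProductSpace Pointwise

noncomputable section

lemma le_infDist' {X : Type*} [PseudoMetricSpace X] {s : Set X} (hs : s.Nonempty) {x : X}
    {b : ℝ} (h : ∀ y ∈ s, b ≤ dist x y) : b ≤ Metric.infDist x s := by
  rw [Metric.infDist_eq_iInf]
  haveI : Nonempty s := hs.to_subtype
  exact le_ciInf fun y => h y y.2

/-- Projection characterization: nearest point in a convex set satisfies the
obtuse-angle inequality. -/
lemma proj_inner_le {d : ℕ} {C : Set (Euc d)} (hcvx : Convex ℝ C) {x p : Euc d}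
    (hp : p ∈ C) (hdist : Metric.infDist x C = dist x p) :
    ∀ c ∈ C, (inner ℝ (x - p) (c - p) : ℝ) ≤ 0 := by
  have h : ‖x - p‖ = ⨅ w : C, ‖x - w‖ := by
    rw [← dist_eq_norm, ← hdist, Metric.infDist_eq_iInf]
    simp_rw [dist_eq_norm]
  exact (norm_eq_iInf_iff_real_inner_le_zero hcvx hp).mp h

/-- Points on the outward ray from the projection have distance to `C` equal to
their distance to the projection point. -/
lemma ray_infDist {d : ℕ} {C : Set (Euc d)} (hne : C.Nonempty) {x p : Euc d} (hp : p ∈ C)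
    (hproj : ∀ c ∈ C, (inner ℝ (x - p) (c - p) : ℝ) ≤ 0) {t : ℝ} (ht : 0 ≤ t) :
    Metric.infDist (p + t • (x - p)) C = t * ‖x - p‖ := by
  apply le_antisymm
  · calc Metric.infDist (p + t • (x - p)) C ≤ dist (p + t • (x - p)) p :=
          Metric.infDist_le_dist_of_mem hp
      _ = t * ‖x - p‖ := by
          rw [dist_eq_norm, add_sub_cancel_left, norm_smul, Real.norm_eq_abs, abs_of_nonneg ht]
  · apply le_infDist' hne
    intro c hc
    have hi : (inner ℝ (t • (x - p)) (c - p) : ℝ) ≤ 0 := by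
      rw [real_inner_smul_left]
      exact mul_nonpos_of_nonneg_of_nonpos ht (hproj c hc)
    have hd : dist (p + t • (x - p)) c = ‖t • (x - p) - (c - p)‖ := by
      rw [dist_eq_norm]
      congr 1
      abel
    have hsq : (t * ‖x - p‖) ^ 2 ≤ (dist (p + t • (x - p)) c) ^ 2 := by
      rw [hd, norm_sub_sq_real]
      have h1 : ‖t • (x - p)‖ = t * ‖x - p‖ := by
        rw [norm_smul, Real.norm_eq_abs, abs_of_nonneg ht]
      rw [h1]
      nlinarith [sq_nonneg ‖c - p‖]
    have h0 : (0 : ℝ) ≤ t * ‖x - p‖ := mul_nonneg ht (norm_nonneg _)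
    nlinarith [dist_nonneg (x := p + t • (x - p)) (y := c)]

/-- Any point of `C + closedBall 0 ε` is within `ε` of `C`. -/
lemma infDist_le_of_mem_add {d : ℕ} {C : Set (Euc d)} {ε : ℝ} {x : Euc d}
    (hx : x ∈ C + Metric.closedBall (0 : Euc d) ε) : Metric.infDist x C ≤ ε := by
  obtain ⟨c, hc, b, hb, rfl⟩ := hx
  calc Metric.infDist (c + b) C ≤ dist (c + b) c := Metric.infDist_le_dist_of_mem hc
    _ = ‖b‖ := by rw [dist_eq_norm, add_sub_cancel_left]
    _ ≤ ε := by simpa using hb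

lemma interior_add_closedBall {d : ℕ} (C : Set (Euc d))
    (hne : C.Nonempty) (hcl : IsClosed C) (hcvx : Convex ℝ C)
    (ε : ℝ) (hε : 0 < ε) :
    interior (C + Metric.closedBall (0 : Euc d) ε) = Metric.thickening ε C := by
  apply Set.Subset.antisymm
  · intro x hx
    have hmem : x ∈ C + Metric.closedBall (0 : Euc d) ε := interior_subset hx
    have hle : Metric.infDist x C ≤ ε := infDist_le_of_mem_add hmem
    rw [Metric.mem_thickening_iff_infDist_lt hne]
    by_contra hlt
    have heq : Metric.infDist x C = ε := le_antisymm hle (not_lt.mp hlt)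
    obtain ⟨r, hr, hball⟩ := Metric.isOpen_iff.mp isOpen_interior x hx
    obtain ⟨p, hp, hdp⟩ := hcl.exists_infDist_eq_dist hne x
    have hproj := proj_inner_le hcvx hp hdp
    have hxp : ‖x - p‖ = ε := by rw [← dist_eq_norm, ← hdp, heq]
    set t : ℝ := 1 + r / (2 * ε) with ht_def
    have ht1 : (1 : ℝ) < t := by
      have : 0 < r / (2 * ε) := div_pos hr (by linarith)
      rw [ht_def]; linarith
    have hz : p + t • (x - p) ∈ interior (C + Metric.closedBall (0 : Euc d) ε) := by
      apply hball
      have : dist (p + t • (x - p)) x = (t - 1) * ε := by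
        have hx' : x = p + (1 : ℝ) • (x - p) := by simp
        rw [dist_eq_norm]
        calc ‖p + t • (x - p) - x‖ = ‖(t - 1) • (x - p)‖ := by
              congr 1
              rw [sub_smul, one_smul]
              abel
          _ = (t - 1) * ε := by
              rw [norm_smul, Real.norm_eq_abs, abs_of_nonneg (by linarith), hxp]
      rw [Metric.mem_ball, this, ht_def]
      have : (1 + r / (2 * ε) - 1) * ε = r / 2 := by field_simp; ring
      rw [this]; linarith
    have hle' : Metric.infDist (p + t • (x - p)) C ≤ ε :=
      infDist_le_of_mem_add (interior_subset hz)
    have heq' : Metric.infDist (p + t • (x - p)) C = t * ε := by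
      rw [ray_infDist hne hp hproj (by linarith), hxp]
    rw [heq'] at hle'
    nlinarith
  · apply interior_maximal _ Metric.isOpen_thickening
    intro x hx
    rw [Metric.mem_thickening_iff] at hx
    obtain ⟨c, hc, hd⟩ := hx
    refine ⟨c, hc, x - c, ?_, by show c + (x - c) = x; rw [add_comm, sub_add_cancel]⟩
    rw [Metric.mem_closedBall, dist_eq_norm, sub_zero, ← dist_eq_norm]
    exact hd.le

theorem statement10 {d : ℕ} (C : Set (Euc d))
    (hne : C.Nonempty) (hcl : IsClosed C) (hcvx : Convex ℝ C)
    (ε : ℝ) (hε : 0 < ε) :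
    ProxRegularWith ε (interior (C + Metric.closedBall (0 : Euc d) ε))ᶜ := by
  rw [interior_add_closedBall C hne hcl hcvx ε hε]
  intro x hx0 hxε
  set U : Set (Euc d) := (Metric.thickening ε C)ᶜ with hU_def
  have hUne : U.Nonempty := by
    by_contra h
    rw [Set.not_nonempty_iff_eq_empty] at h
    have h0 : Metric.infDist x U = 0 := by rw [h, Metric.infDist_empty]
    have hx0' : 0 < Metric.infDist x U := hx0
    rw [h0] at hx0'
    exact lt_irrefl 0 hx0'
  have hUinf : ∀ u ∈ U, ε ≤ Metric.infDist u C := by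
    intro u hu
    have : u ∉ Metric.thickening ε C := hu
    rw [Metric.mem_thickening_iff_infDist_lt hne] at this
    exact not_lt.mp this
  -- x is in the thickening
  have hxU : x ∉ U := by
    intro h
    rw [Metric.infDist_zero_of_mem h] at hx0
    exact lt_irrefl 0 hx0
  have hxth : Metric.infDist x C < ε := by
    rw [hU_def] at hxU
    simpa [Metric.mem_thickening_iff_infDist_lt hne] using hxU
  set δ : ℝ := Metric.infDist x C with hδ_def
  -- lower bound for distances to U
  have hlow : ∀ u ∈ U, ε - δ ≤ dist x u := by
    intro u hu
    have h1 : Metric.infDist u C ≤ δ + dist u x := by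
      calc Metric.infDist u C ≤ Metric.infDist x C + dist u x :=
            Metric.infDist_le_infDist_add_dist
        _ = δ + dist u x := rfl
    have h2 := hUinf u hu
    rw [dist_comm]
    linarith
  have hδpos : 0 < δ := by
    rcases lt_or_eq_of_le (Metric.infDist_nonneg (x := x) (s := C)) with h | h
    · exact h
    · exfalso
      have hδ0 : δ = 0 := by rw [hδ_def, ← h]
      have : ε ≤ Metric.infDist x U := by
        apply le_infDist' hUne
        intro u hu
        have := hlow u hu
        rw [hδ0] at this
        linarith
      linarith
  obtain ⟨p, hp, hdp⟩ := hcl.exists_infDist_eq_dist hne x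
  have hproj := proj_inner_le hcvx hp hdp
  have hxp : ‖x - p‖ = δ := by rw [← dist_eq_norm, ← hdp, hδ_def]
  set y : Euc d := p + (ε / δ) • (x - p) with hy_def
  have htpos : (0 : ℝ) ≤ ε / δ := le_of_lt (div_pos hε hδpos)
  have hyC : Metric.infDist y C = ε := by
    rw [hy_def, ray_infDist hne hp hproj htpos, hxp]
    field_simp
  have hyU : y ∈ U := by
    rw [hU_def, Set.mem_compl_iff, Metric.mem_thickening_iff_infDist_lt hne, hyC]
    exact lt_irrefl ε
  have hyx : y - x = ((ε - δ) / δ) • (x - p) := by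
    have hx' : x = p + (1 : ℝ) • (x - p) := by simp
    rw [hy_def]
    calc p + (ε / δ) • (x - p) - x = (ε / δ) • (x - p) - (x - p) := by abel
      _ = (ε / δ - 1) • (x - p) := by rw [sub_smul, one_smul]
      _ = ((ε - δ) / δ) • (x - p) := by
          congr 1
          field_simp
  have hdxy : dist x y = ε - δ := by
    rw [dist_comm, dist_eq_norm, hyx, norm_smul,
      Real.norm_eq_abs, abs_of_nonneg (div_nonneg (by linarith) hδpos.le), hxp]
    field_simp
  have hinfU : Metric.infDist x U = ε - δ := by
    apply le_antisymm
    · rw [← hdxy]; exact Metric.infDist_le_dist_of_mem hyU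
    · exact le_infDist' hUne hlow
  refine ⟨y, ⟨hyU, by rw [hdxy, hinfU]⟩, ?_⟩
  rintro u ⟨huU, hud⟩
  rw [hinfU] at hud
  -- uniqueness
  have hup_ge : ε ≤ ‖u - p‖ := by
    calc ε ≤ Metric.infDist u C := hUinf u huU
      _ ≤ dist u p := Metric.infDist_le_dist_of_mem hp
      _ = ‖u - p‖ := dist_eq_norm u p
  have hux : ‖u - x‖ = ε - δ := by rwa [dist_eq_norm, norm_sub_rev] at hud
  have hup_le : ‖u - p‖ ≤ ε := by
    calc ‖u - p‖ ≤ ‖u - x‖ + ‖x - p‖ := norm_sub_le_norm_sub_add_norm_sub u x p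
      _ = ε := by rw [hux, hxp]; ring
  have hup : ‖u - p‖ = ε := le_antisymm hup_le hup_ge
  have hsplit : u - p = (u - x) + (x - p) := by abel
  have hinner : (inner ℝ (u - x) (x - p) : ℝ) = ‖u - x‖ * ‖x - p‖ := by
    have hexp : ‖u - p‖ ^ 2 = ‖u - x‖ ^ 2 + 2 * (inner ℝ (u - x) (x - p) : ℝ) + ‖x - p‖ ^ 2 := by
      rw [hsplit, norm_add_sq_real]
    rw [hup, hux, hxp] at hexp
    rw [hux, hxp]
    nlinarith
  have hkey := (inner_eq_norm_mul_iff_real).mp hinner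
  -- ‖x - p‖ • (u - x) = ‖u - x‖ • (x - p)
  rw [hux, hxp] at hkey
  have : u - x = ((ε - δ) / δ) • (x - p) := by
    have hδne : δ ≠ 0 := ne_of_gt hδpos
    have := congrArg (fun v => (δ⁻¹ : ℝ) • v) hkey
    simpa [smul_smul, hδne, div_eq_inv_mul, mul_comm] using this
  have : u - x = y - x := by rw [this, hyx]
  have := congrArg (fun v => v + x) this
  simpa using this

end
end

section
/- Let f : ℝ^d → ℝ∪{+∞} be lower semicontinuous, quasiconvex, with min f = 0 attained, let ε > 0 and let f_ε(x) := inf_{w∈𝔹} f(x−εw). Then for every x ∈ dom f_ε, the sublevel set [f ≤ f_ε(x)] is nonempty, closed and convex, the point z := proj(x; [f ≤ f_ε(x)]) (the unique nearest point of x in [f ≤ f_ε(x)]) satisfies f(z) = f_ε(x), and the metric slopes satisfy |∇f_ε|(x) ≥ |∇f|(z). -/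
open Filter Set Metric MeasureTheory
open scoped Topology ENNReal NNReal RealInnerProductSpace Pointwise

noncomputable section

lemma statement12_proj_unique {d : ℕ} {S : Set (Euc d)} (hconv : Convex ℝ S) {x z z' : Euc d}
    (hz : z ∈ S) (hz' : z' ∈ S) (h1 : dist x z = Metric.infDist x S)
    (h2 : dist x z' = Metric.infDist x S) : z' = z := by
  have : Nonempty S := ⟨⟨z, hz⟩⟩
  have key : ∀ {w : Euc d}, w ∈ S → dist x w = Metric.infDist x S →
      (‖x - w‖ = ⨅ v : S, ‖x - v‖) := by
    intro w hw hdw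
    rw [← dist_eq_norm, hdw, Metric.infDist_eq_iInf]
    exact iInf_congr fun v => dist_eq_norm _ _
  have hA := (norm_eq_iInf_iff_real_inner_le_zero hconv hz).1 (key hz h1) z' hz'
  have hB := (norm_eq_iInf_iff_real_inner_le_zero hconv hz').1 (key hz' h2) z hz
  have hsum : ‖z' - z‖ ^ 2 ≤ 0 := by
    have e1 : (inner ℝ (x - z') (z - z') : ℝ) = inner ℝ (z' - x) (z' - z) := by
      rw [show x - z' = -(z' - x) from (neg_sub _ _).symm,
        show z - z' = -(z' - z) from (neg_sub _ _).symm, inner_neg_neg]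
    have e2 : (inner ℝ (x - z) (z' - z) : ℝ) + inner ℝ (z' - x) (z' - z) = ‖z' - z‖ ^ 2 := by
      rw [← inner_add_left, show x - z + (z' - x) = z' - z by abel,
        real_inner_self_eq_norm_sq]
    rw [e1] at hB
    linarith
  have h0 : ‖z' - z‖ = 0 := le_antisymm (by nlinarith [norm_nonneg (z' - z)]) (norm_nonneg _)
  exact sub_eq_zero.mp (norm_eq_zero.mp h0)

lemma statement12_attain {d : ℕ} (f : Euc d → EReal) (hlsc : LowerSemicontinuous f)
    (hpos : ∀ y, (0 : EReal) ≤ f y) (ε : ℝ) (x : Euc d)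
    (hx : maxConvReg f ε x ≠ ⊤) :
    ∃ w ∈ Metric.closedBall (0 : Euc d) 1, f (x - ε • w) ≤ maxConvReg f ε x := by
  set m := maxConvReg f ε x with hm
  have hm0 : (0 : EReal) ≤ m := le_iInf fun w => le_iInf fun _ => hpos _
  have hmbot : m ≠ ⊥ := fun h => by simp [h] at hm0
  set r : ℝ := m.toReal with hr
  have hmr : m = (r : EReal) := (EReal.coe_toReal hx hmbot).symm
  set C : ℕ → Set (Euc d) := fun n =>
    {w | w ∈ Metric.closedBall (0 : Euc d) 1 ∧ f (x - ε • w) ≤ ((r + 1 / (n + 1) : ℝ) : EReal)}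
    with hC
  have hCclosed : ∀ n, IsClosed (C n) := by
    intro n
    apply IsClosed.inter Metric.isClosed_closedBall
    exact (hlsc.isClosed_preimage _).preimage (by fun_prop)
  have hCsub : ∀ n, C n ⊆ Metric.closedBall (0 : Euc d) 1 := fun n w hw => hw.1
  have hCne : ∀ n, (C n).Nonempty := by
    intro n
    have hlt : m < ((r + 1 / (n + 1) : ℝ) : EReal) := by
      rw [hmr, EReal.coe_lt_coe_iff]
      have : (0:ℝ) < 1 / (n + 1) := by positivity
      linarith
    rw [hm, maxConvReg] at hlt
    rw [iInf_lt_iff] at hlt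
    obtain ⟨w, hw⟩ := hlt
    rw [iInf_lt_iff] at hw
    obtain ⟨hw1, hw2⟩ := hw
    exact ⟨w, hw1, hw2.le⟩
  have hdec : ∀ n, C (n + 1) ⊆ C n := by
    intro n w hw
    refine ⟨hw.1, hw.2.trans ?_⟩
    rw [EReal.coe_le_coe_iff]
    push_cast
    have h1 : (1:ℝ) / (n + 1 + 1) ≤ 1 / (n + 1) := by
      apply one_div_le_one_div_of_le
      · positivity
      · linarith
    linarith
  have hCcompact : IsCompact (C 0) :=
    (isCompact_closedBall _ _).of_isClosed_subset (hCclosed 0) (hCsub 0)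
  obtain ⟨w, hw⟩ := IsCompact.nonempty_iInter_of_sequence_nonempty_isCompact_isClosed
    C hdec hCne hCcompact hCclosed
  simp only [Set.mem_iInter] at hw
  refine ⟨w, (hw 0).1, ?_⟩
  rw [hmr]
  have hfw_top : f (x - ε • w) ≠ ⊤ := by
    intro h
    have h2 := (hw 0).2
    rw [h, top_le_iff] at h2
    exact EReal.coe_ne_top _ h2
  have hfw_bot : f (x - ε • w) ≠ ⊥ := fun h => by simpa [h] using hpos (x - ε • w)
  rw [← EReal.coe_toReal hfw_top hfw_bot, EReal.coe_le_coe_iff]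
  apply le_of_forall_pos_le_add
  intro δ hδ
  obtain ⟨n, hn⟩ := exists_nat_one_div_lt hδ
  have := (hw n).2
  rw [← EReal.coe_toReal hfw_top hfw_bot, EReal.coe_le_coe_iff] at this
  linarith

theorem statement12 {d : ℕ} (f : Euc d → EReal)
    (hne_bot : ∀ x, f x ≠ ⊥)
    (hlsc : LowerSemicontinuous f)
    (hqc : QuasiConvexE f)
    (hmin : ∃ x₀ : Euc d, f x₀ = 0 ∧ ∀ x, (0 : EReal) ≤ f x)
    (ε : ℝ) (hε : 0 < ε)
    (x : Euc d) (hx : maxConvReg f ε x ≠ ⊤) :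
    ({y : Euc d | f y ≤ maxConvReg f ε x}).Nonempty ∧
    IsClosed {y : Euc d | f y ≤ maxConvReg f ε x} ∧
    Convex ℝ {y : Euc d | f y ≤ maxConvReg f ε x} ∧
    ∃ z : Euc d,
      (z ∈ {y : Euc d | f y ≤ maxConvReg f ε x} ∧
        dist x z = Metric.infDist x {y : Euc d | f y ≤ maxConvReg f ε x}) ∧
      (∀ z' : Euc d,
        z' ∈ {y : Euc d | f y ≤ maxConvReg f ε x} ∧
          dist x z' = Metric.infDist x {y : Euc d | f y ≤ maxConvReg f ε x} → z' = z) ∧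
      f z = maxConvReg f ε x ∧
      mslope f z ≤ mslope (maxConvReg f ε) x := by
  obtain ⟨x₀, hfx₀, hpos⟩ := hmin
  set m := maxConvReg f ε x with hm
  set S := {y : Euc d | f y ≤ m} with hSdef
  have hm0 : (0 : EReal) ≤ m := le_iInf fun w => le_iInf fun _ => hpos _
  have hmbot : m ≠ ⊥ := fun h => by simp [h] at hm0
  have hreg0 : ∀ u : Euc d, (0 : EReal) ≤ maxConvReg f ε u :=
    fun u => le_iInf fun w => le_iInf fun _ => hpos _
  have hSne : S.Nonempty := ⟨x₀, by simp only [hSdef, Set.mem_setOf_eq, hfx₀]; exact hm0⟩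
  have hSclosed : IsClosed S := hlsc.isClosed_preimage m
  have hSconv : Convex ℝ S := by
    intro a ha b hb s t hs ht hst
    have hts : t = 1 - s := by linarith
    subst hts
    exact (hqc a b s hs (by linarith)).trans (max_le ha hb)
  obtain ⟨w₀, hw₀B, hfw₀⟩ := statement12_attain f hlsc hpos ε x hx
  have hinf_le : Metric.infDist x S ≤ ε := by
    have hmem : x - ε • w₀ ∈ S := hfw₀
    calc Metric.infDist x S ≤ dist x (x - ε • w₀) := Metric.infDist_le_dist_of_mem hmem
    _ = ‖ε • w₀‖ := by rw [dist_eq_norm]; congr 1; abel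
    _ ≤ ε := by
        rw [norm_smul, Real.norm_eq_abs, abs_of_pos hε]
        have : ‖w₀‖ ≤ 1 := by simpa using hw₀B
        nlinarith
  obtain ⟨z, hzS, hzd⟩ := hSclosed.exists_infDist_eq_dist hSne x
  have hzd' : dist x z = Metric.infDist x S := hzd.symm
  have hxz_le : ‖x - z‖ ≤ ε := by rw [← dist_eq_norm, hzd']; exact hinf_le
  -- the projection is within ε of x, hence f z = m
  have hfz : f z = m := by
    refine le_antisymm hzS ?_
    have hwmem : ε⁻¹ • (x - z) ∈ Metric.closedBall (0 : Euc d) 1 := by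
      simp only [Metric.mem_closedBall, dist_zero_right, norm_smul, Real.norm_eq_abs,
        abs_of_pos (inv_pos.mpr hε)]
      rw [inv_mul_le_iff₀ hε]
      linarith
    have heq : x - ε • (ε⁻¹ • (x - z)) = z := by
      rw [smul_inv_smul₀ hε.ne']; abel
    have := iInf₂_le (f := fun w (_ : w ∈ Metric.closedBall (0 : Euc d) 1) => f (x - ε • w))
      (ε⁻¹ • (x - z)) hwmem
    rw [heq] at this
    exact this
  have hftop : f z ≠ ⊤ := hfz ▸ hx
  refine ⟨hSne, hSclosed, hSconv, z, ⟨hzS, hzd'⟩,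
    fun z' hz' => statement12_proj_unique hSconv hzS hz'.1 hzd' hz'.2, hfz, ?_⟩
  -- slope inequality
  have hkey : ∀ y : Euc d, maxConvReg f ε ((x - z) + y) ≤ f y := by
    intro y
    have hwmem : ε⁻¹ • (x - z) ∈ Metric.closedBall (0 : Euc d) 1 := by
      simp only [Metric.mem_closedBall, dist_zero_right, norm_smul, Real.norm_eq_abs,
        abs_of_pos (inv_pos.mpr hε)]
      rw [inv_mul_le_iff₀ hε]
      linarith
    have heq : (x - z) + y - ε • (ε⁻¹ • (x - z)) = y := by
      rw [smul_inv_smul₀ hε.ne']; abel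
    have := iInf₂_le (f := fun w (_ : w ∈ Metric.closedBall (0 : Euc d) 1) =>
      f ((x - z) + y - ε • w)) (ε⁻¹ • (x - z)) hwmem
    rw [heq] at this
    exact this
  simp only [mslope]
  rw [if_neg hftop, if_neg hx]
  have hmap : Filter.map (fun y => (x - z) + y) (𝓝[≠] z) = 𝓝[≠] x := by
    have h := (Homeomorph.addLeft (x - z)).map_punctured_nhds_eq z
    simp only [Homeomorph.coe_addLeft, sub_add_cancel] at h
    exact h
  rw [← hmap, ← Filter.limsup_comp]
  refine Filter.limsup_le_limsup ?_ (by isBoundedDefault) (by isBoundedDefault)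
  apply Filter.eventually_of_mem self_mem_nhdsWithin
  intro y hy
  have hyz : y ≠ z := hy
  have hd0 : 0 < dist z y := dist_pos.mpr (Ne.symm hyz)
  simp only [Function.comp_apply]
  have hd : dist x ((x - z) + y) = dist z y := by
    rw [dist_eq_norm, dist_eq_norm]; congr 1; abel
  rw [hd]
  apply ENNReal.ofReal_le_ofReal
  have hnum : (max (f z - f y) 0).toReal ≤
      (max (m - maxConvReg f ε ((x - z) + y)) 0).toReal := by
    apply EReal.toReal_le_toReal
    · exact max_le_max (EReal.sub_le_sub (le_of_eq hfz) (hkey y)) le_rfl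
    · exact (EReal.bot_lt_zero.trans_le (le_max_right _ _)).ne'
    · have hle : m - maxConvReg f ε ((x - z) + y) ≤ m := by
        calc m - maxConvReg f ε ((x - z) + y) ≤ m - 0 :=
              EReal.sub_le_sub le_rfl (hreg0 _)
        _ = m := by simp
      exact (max_lt (lt_of_le_of_lt hle hx.lt_top) (lt_top_iff_ne_top.mpr (by simp))).ne
  gcongr

end
end

section
/- Let f : ℝ^d → ℝ∪{+∞} be lower semicontinuous, quasiconvex, with min f = 0 attained. Let x₀ ∈ ℝ^d, δ > 0 and ℓ > 0 be such that B̄(x₀,δ) ⊂ dom f and |∇f|(y) > ℓ for every y ∈ B̄(x₀,δ). Define h := f + I_{B̄(x₀,δ)} and, for ε > 0, h_ε := h ⋄ I_{ε𝔹}. Then: (a) h_ε is quasiconvex and coercive, with dom h_ε = B̄(x₀,δ) + ε𝔹 compact; (b) int([h_ε ≤ α]) ≠ ∅ for every α > inf h_ε; (c) for every x ∈ dom h_ε \ argmin h_ε there exist δ', ℓ' > 0 such that |∇h_ε|(y) > ℓ' for all y ∈ B(x,δ') ∩ dom h_ε; (d) for every β ∈ (inf h_ε, sup h_ε), the set ℝ^d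 \ int([h_ε ≤ β]) is ε-prox-regular. -/
open Filter Set Metric MeasureTheory
open scoped Topology ENNReal NNReal RealInnerProductSpace Pointwise

noncomputable section

/-- Attainment of the minimum of a nonneg. function with closed sublevel sets on a compact set. -/
lemma lsc_exists_min {d : ℕ} {g : Euc d → EReal} (hg0 : ∀ w, 0 ≤ g w)
    (hcl : ∀ α : ℝ, IsClosed {w | g w ≤ (α : EReal)})
    {K : Set (Euc d)} (hK : IsCompact K) (hKcl : IsClosed K) (hne : K.Nonempty) :
    ∃ w ∈ K, ∀ w' ∈ K, g w ≤ g w' := by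
  by_cases htop : ∀ w ∈ K, g w = ⊤
  · obtain ⟨w, hw⟩ := hne
    exact ⟨w, hw, fun w' hw' => (htop w' hw').symm ▸ le_top⟩
  push_neg at htop
  obtain ⟨w₁, hw₁K, hw₁⟩ := htop
  set b : EReal := ⨅ w ∈ K, g w with hb
  have hble : ∀ w ∈ K, b ≤ g w := fun w hw => iInf₂_le w hw
  have hb0 : (0 : EReal) ≤ b := le_iInf₂ fun w hw => hg0 w
  have hbtop : b ≠ ⊤ := fun h => hw₁ (top_le_iff.mp (h ▸ hble w₁ hw₁K))
  have hbbot : b ≠ ⊥ := fun h => by rw [h] at hb0; exact absurd hb0 (by simp)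
  set β : ℝ := b.toReal with hβ
  have hbβ : (β : EReal) = b := EReal.coe_toReal hbtop hbbot
  set A : ℕ → Set (Euc d) := fun n => K ∩ {w | g w ≤ ((β + 1 / (n + 1) : ℝ) : EReal)} with hA
  have hAne : ∀ n : ℕ, (A n).Nonempty := by
    intro n
    have hpos : (0 : ℝ) < 1 / (n + 1) := by positivity
    have hlt : b < ((β + 1 / (n + 1) : ℝ) : EReal) := by
      rw [← hbβ]; exact_mod_cast (by linarith : β < β + 1 / (n + 1))
    rw [hb] at hlt
    obtain ⟨w, hw⟩ := iInf_lt_iff.mp hlt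
    obtain ⟨hwK, hwlt⟩ := iInf_lt_iff.mp hw
    exact ⟨w, hwK, le_of_lt hwlt⟩
  have hAcl : ∀ n, IsClosed (A n) := fun n => hKcl.inter (hcl _)
  have hAcp : ∀ n, IsCompact (A n) := fun n => hK.inter_right (hcl _)
  have hAdec : ∀ n : ℕ, A (n + 1) ⊆ A n := by
    intro n w hw
    have hw2 : g w ≤ ((β + 1 / (↑(n+1) + 1) : ℝ) : EReal) := hw.2
    refine ⟨hw.1, show g w ≤ ((β + 1 / (↑n + 1) : ℝ) : EReal) from le_trans hw2 ?_⟩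
    rw [EReal.coe_le_coe_iff]
    have h1 : (0:ℝ) < (n:ℝ) + 1 := by positivity
    have : (1 : ℝ) / (↑(n+1) + 1) ≤ 1 / (↑n + 1) := by
      apply one_div_le_one_div_of_le h1
      push_cast; linarith
    linarith
  obtain ⟨winf, hwinf⟩ := IsCompact.nonempty_iInter_of_sequence_nonempty_isCompact_isClosed
    A hAdec hAne (hAcp 0) hAcl
  simp only [Set.mem_iInter] at hwinf
  have hwK : winf ∈ K := (hwinf 0).1
  have hgtop : g winf ≠ ⊤ := by
    intro h
    have h0 : g winf ≤ ((β + 1 / (↑(0:ℕ) + 1) : ℝ) : EReal) := (hwinf 0).2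
    rw [h, top_le_iff] at h0
    exact EReal.coe_ne_top _ h0
  have hgbot : g winf ≠ ⊥ := fun h => by have := hg0 winf; rw [h] at this; exact absurd this (by simp)
  have hkey : g winf ≤ b := by
    rw [← hbβ, ← EReal.coe_toReal hgtop hgbot, EReal.coe_le_coe_iff]
    apply le_of_forall_pos_le_add
    intro c hc
    obtain ⟨n, hn⟩ := exists_nat_one_div_lt hc
    have h2 : g winf ≤ ((β + 1 / (↑n + 1) : ℝ) : EReal) := (hwinf n).2
    rw [← EReal.coe_toReal hgtop hgbot, EReal.coe_le_coe_iff] at h2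
    linarith
  exact ⟨winf, hwK, fun w' hw' => hkey.trans (hble w' hw')⟩

/-- From a strict slope bound, extract descent points at all small scales. -/
lemma mslope_descent {d : ℕ} {f : Euc d → EReal} {u : Euc d} {ℓ : ℝ}
    (hℓ : 0 < ℓ) (hbot : ∀ y, f y ≠ ⊥) (hutop : f u ≠ ⊤)
    (hsl : ENNReal.ofReal ℓ < mslope f u) (η : ℝ) (hη : 0 < η) :
    ∃ w : Euc d, dist w u < η ∧ w ≠ u ∧ f w ≠ ⊤ ∧ f w ≠ ⊥ ∧
      (f w).toReal < (f u).toReal - ℓ * dist u w := by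
  unfold mslope at hsl
  rw [if_neg hutop] at hsl
  have hfreq := Filter.frequently_lt_of_lt_limsup (by isBoundedDefault) hsl
  have hev : ∀ᶠ z in 𝓝[≠] u, dist z u < η ∧ z ≠ u := by
    filter_upwards [mem_nhdsWithin_of_mem_nhds (Metric.ball_mem_nhds u hη),
      self_mem_nhdsWithin] with z hz1 hz2
    exact ⟨Metric.mem_ball.mp hz1, hz2⟩
  obtain ⟨w, hwq, hwd, hwne⟩ := (hfreq.and_eventually hev).exists
  set M : ℝ := (max (f u - f w) 0).toReal with hM
  have hdpos : 0 < dist u w := dist_pos.mpr (fun hc => hwne hc.symm)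
  have hQpos : 0 < M / dist u w := by
    by_contra hc
    push_neg at hc
    have h0 : ENNReal.ofReal (M / dist u w) = 0 := ENNReal.ofReal_eq_zero.mpr hc
    rw [h0] at hwq
    simp at hwq
  have hQ : ℓ < M / dist u w := by rwa [ENNReal.ofReal_lt_ofReal_iff hQpos] at hwq
  have hMge : ℓ * dist u w < M := (lt_div_iff₀ hdpos).mp hQ
  have hMpos : 0 < M := lt_trans (by positivity) hMge
  have hwtop : f w ≠ ⊤ := by
    intro hc
    have h1 : M = 0 := by rw [hM, hc, EReal.sub_top]; simp
    linarith
  set vu : ℝ := (f u).toReal with hvu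
  set vw : ℝ := (f w).toReal with hvw
  have hvue : (vu : EReal) = f u := EReal.coe_toReal hutop (hbot u)
  have hvwe : (vw : EReal) = f w := EReal.coe_toReal hwtop (hbot w)
  have hsub : f u - f w = ((vu - vw : ℝ) : EReal) := by
    rw [← hvue, ← hvwe]; exact (EReal.coe_sub _ _).symm
  rcases le_total (vu - vw) 0 with hle | hle
  · exfalso
    have h1 : M = 0 := by
      rw [hM, hsub, max_eq_right (by exact_mod_cast hle : ((vu - vw : ℝ) : EReal) ≤ 0)]
      simp
    linarith
  · have hMeq : M = vu - vw := by
      rw [hM, hsub, max_eq_left (by exact_mod_cast hle : (0 : EReal) ≤ ((vu - vw : ℝ) : EReal))]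
      exact EReal.toReal_coe _
    exact ⟨w, hwd, hwne, hwtop, hbot w, by linarith⟩

lemma combo_normsq {d : ℕ} (a b : Euc d) (t : ℝ) :
    ‖t • a + (1 - t) • b‖ ^ 2
      = t * ‖a‖ ^ 2 + (1 - t) * ‖b‖ ^ 2 - t * (1 - t) * ‖a - b‖ ^ 2 := by
  have h : ∀ v : Euc d, ‖v‖ ^ 2 = ⟪v, v⟫ := fun v => (real_inner_self_eq_norm_sq v).symm
  rw [h, h, h, h]
  simp only [inner_add_left, inner_add_right, inner_sub_left, inner_sub_right,
    real_inner_smul_left, real_inner_smul_right]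
  rw [real_inner_comm b a]
  ring

/-- Projection inequality for nearest points of convex sets. -/
lemma nearest_inner_le {d : ℕ} {C : Set (Euc d)} (hC : Convex ℝ C) {u c : Euc d} (hc : c ∈ C)
    (hmin : ∀ c' ∈ C, dist u c ≤ dist u c') : ∀ c' ∈ C, ⟪u - c, c' - c⟫ ≤ 0 := by
  have : Nonempty C := ⟨⟨c, hc⟩⟩
  refine (norm_eq_iInf_iff_real_inner_le_zero hC hc).mp ?_
  have hbdd : BddBelow (Set.range fun w : C => ‖u - (w : Euc d)‖) := by
    refine ⟨0, ?_⟩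
    rintro x ⟨w, rfl⟩
    exact norm_nonneg _
  refine le_antisymm (le_ciInf fun w => ?_) (ciInf_le hbdd ⟨c, hc⟩)
  rw [← dist_eq_norm, ← dist_eq_norm]
  exact hmin w w.2

/-- Moving away from a convex set along the normal ray at a nearest point increases
the distance to every point of the set at unit rate. -/
lemma ray_dist_lower {d : ℕ} {C : Set (Euc d)} (hC : Convex ℝ C) {u c : Euc d} (hc : c ∈ C)
    (hmin : ∀ c' ∈ C, dist u c ≤ dist u c') (hne : u ≠ c) {t : ℝ} (ht : 0 ≤ t) :
    ∀ c' ∈ C, dist u c + t ≤ dist (u + t • (‖u - c‖⁻¹ • (u - c))) c' := by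
  intro c' hc'
  set n : Euc d := ‖u - c‖⁻¹ • (u - c) with hn
  have hucpos : 0 < ‖u - c‖ := by
    rw [norm_pos_iff]; exact sub_ne_zero.mpr hne
  have hinner : ⟪u - c, c' - c⟫ ≤ 0 := nearest_inner_le hC hc hmin c' hc'
  have key : dist u c + t ≤ ⟪u + t • n - c', n⟫ := by
    have hexp : u + t • n - c' = (u - c) + (c - c') + t • n := by abel
    rw [hexp, inner_add_left, inner_add_left, real_inner_smul_left]
    have h1 : ⟪u - c, n⟫ = ‖u - c‖ := by
      rw [hn, real_inner_smul_right, real_inner_self_eq_norm_sq]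
      field_simp
    have h2 : ⟪n, n⟫ = 1 := by
      rw [hn, real_inner_smul_left, real_inner_smul_right, real_inner_self_eq_norm_sq]
      field_simp
    have h3 : (0:ℝ) ≤ ⟪c - c', n⟫ := by
      rw [hn, real_inner_smul_right]
      have hcc : ⟪c - c', u - c⟫ = -⟪u - c, c' - c⟫ := by
        rw [real_inner_comm, show c - c' = -(c' - c) by abel, inner_neg_right]
      rw [hcc]
      have h4 : (0:ℝ) ≤ ‖u - c‖⁻¹ := by positivity
      have h5 : (0:ℝ) ≤ -⟪u - c, c' - c⟫ := by linarith
      exact mul_nonneg h4 h5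
    rw [h1, h2, dist_eq_norm]
    nlinarith
  calc dist u c + t ≤ ⟪u + t • n - c', n⟫ := key
    _ ≤ ‖u + t • n - c'‖ * ‖n‖ := real_inner_le_norm _ _
    _ ≤ dist (u + t • n) c' := by
        rw [dist_eq_norm]
        have hnorm : ‖n‖ = 1 := by
          rw [hn, norm_smul, norm_inv, Real.norm_eq_abs, abs_of_pos hucpos]
          field_simp
        rw [hnorm, mul_one]



lemma aux_core {dd σ t na nu nd : ℝ} (h1 : na ≤ dd) (h2 : nu ≤ dd) (h3 : σ ≤ nd)
    (ht0 : 0 ≤ t) (ht1 : t ≤ 1) (hσ : 0 ≤ σ) (hna : 0 ≤ na) (hnu : 0 ≤ nu) :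
    t * na ^ 2 + (1 - t) * nu ^ 2 - t * (1 - t) * nd ^ 2 ≤ dd ^ 2 - t * (1 - t) * σ ^ 2 := by
  have e1 : na ^ 2 ≤ dd ^ 2 := by nlinarith only [h1, hna]
  have e2 : nu ^ 2 ≤ dd ^ 2 := by nlinarith only [h2, hnu]
  have e3 : σ ^ 2 ≤ nd ^ 2 := by nlinarith only [h3, hσ]
  have e4 : t * na ^ 2 ≤ t * dd ^ 2 := mul_le_mul_of_nonneg_left e1 ht0
  have e5 : (1 - t) * nu ^ 2 ≤ (1 - t) * dd ^ 2 :=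
    mul_le_mul_of_nonneg_left e2 (by linarith only [ht1])
  have e6 : t * (1 - t) * σ ^ 2 ≤ t * (1 - t) * nd ^ 2 :=
    mul_le_mul_of_nonneg_left e3 (mul_nonneg ht0 (by linarith only [ht1]))
  linarith only [e4, e5, e6]

lemma aux_sqrt {a dd z : ℝ} (ha : 0 ≤ a) (h2 : a ^ 2 ≤ dd ^ 2 - z) (hδ : 0 < dd)
    (hR : 0 ≤ dd - z / (2 * dd)) : a ≤ dd - z / (2 * dd) := by
  set w : ℝ := z / (2 * dd) with hw
  have hz : z = 2 * dd * w := by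
    rw [hw]
    field_simp
  rw [hz] at h2
  nlinarith only [ha, h2, hR, sq_nonneg w]

set_option maxHeartbeats 1000000 in
theorem statement15 {d : ℕ} (f : Euc d → EReal)
    (hne_bot : ∀ x, f x ≠ ⊥)
    (hlsc : LowerSemicontinuous f)
    (hqc : QuasiConvexE f)
    (hmin : ∃ x₀ : Euc d, f x₀ = 0 ∧ ∀ x, (0 : EReal) ≤ f x)
    (x₀ : Euc d) (δ ℓ : ℝ) (hδ : 0 < δ) (hℓ : 0 < ℓ)
    (hdom : ∀ y ∈ Metric.closedBall x₀ δ, f y ≠ ⊤)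
    (hslope : ∀ y ∈ Metric.closedBall x₀ δ, ENNReal.ofReal ℓ < mslope f y)
    (ε : ℝ) (hε : 0 < ε) :
    QuasiConvexE (maxConvReg (fun y => f y + erealInd (Metric.closedBall x₀ δ) y) ε) ∧
    CoerciveE (maxConvReg (fun y => f y + erealInd (Metric.closedBall x₀ δ) y) ε) ∧
    {x : Euc d | maxConvReg (fun y => f y + erealInd (Metric.closedBall x₀ δ) y) ε x ≠ ⊤}
      = Metric.closedBall x₀ δ + Metric.closedBall (0 : Euc d) ε ∧
    IsCompact {x : Euc d |
      maxConvReg (fun y => f y + erealInd (Metric.closedBall x₀ δ) y) ε x ≠ ⊤} ∧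
    (∀ α : ℝ,
      (⨅ x, maxConvReg (fun y => f y + erealInd (Metric.closedBall x₀ δ) y) ε x) < (α : EReal) →
      (interior {x : Euc d |
        maxConvReg (fun y => f y + erealInd (Metric.closedBall x₀ δ) y) ε x
          ≤ (α : EReal)}).Nonempty) ∧
    HypH2 (maxConvReg (fun y => f y + erealInd (Metric.closedBall x₀ δ) y) ε) ∧
    (∀ β : ℝ,
      (⨅ x, maxConvReg (fun y => f y + erealInd (Metric.closedBall x₀ δ) y) ε x) < (β : EReal) →
      (β : EReal) < (⨆ x, maxConvReg (fun y => f y + erealInd (Metric.closedBall x₀ δ) y) ε x) →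
      ProxRegularWith ε (interior {x : Euc d |
        maxConvReg (fun y => f y + erealInd (Metric.closedBall x₀ δ) y) ε x
          ≤ (β : EReal)})ᶜ) := by
  classical
  obtain ⟨xm, hxm0, hf0⟩ := hmin
  set B : Set (Euc d) := Metric.closedBall x₀ δ with hB
  set h : Euc d → EReal := fun y => f y + erealInd (Metric.closedBall x₀ δ) y with hh
  set F : Euc d → EReal := maxConvReg h ε with hFdef
  have hcoe_top : ∀ α : ℝ, ¬ ((⊤:EReal) ≤ (α:EReal)) := fun α hcon =>
    EReal.coe_ne_top α (top_le_iff.mp hcon)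
  have hval : ∀ y ∈ B, h y = f y := by
    intro y hy
    simp only [hh, erealInd, if_pos (show y ∈ Metric.closedBall x₀ δ from hy), add_zero]
  have htop' : ∀ y, y ∉ B → h y = ⊤ := by
    intro y hy
    simp only [hh, erealInd, if_neg (show y ∉ Metric.closedBall x₀ δ from hy)]
    exact EReal.add_top_of_ne_bot (hne_bot y)
  have htop : ∀ y, h y = ⊤ ↔ y ∉ B := by
    intro y
    constructor
    · intro hy hyB
      rw [hval y hyB] at hy
      exact hdom y hyB hy
    · exact htop' y
  have hh0 : ∀ y, 0 ≤ h y := by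
    intro y
    by_cases hy : y ∈ B
    · rw [hval y hy]; exact hf0 y
    · rw [htop' y hy]; exact le_top
  have hBconv : Convex ℝ B := convex_closedBall x₀ δ
  have hqch : QuasiConvexE h := by
    intro a b t ht0 ht1
    by_cases ha : a ∈ B
    · by_cases hb : b ∈ B
      · have hmem : t • a + (1 - t) • b ∈ B := hBconv ha hb ht0 (by linarith) (by ring)
        rw [hval _ hmem, hval _ ha, hval _ hb]
        exact hqc a b t ht0 ht1
      · rw [htop' b hb]
        simp
    · rw [htop' a ha]
      simp
  have hsubh : ∀ α : ℝ, {y | h y ≤ (α : EReal)} = B ∩ {y | f y ≤ (α : EReal)} := by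
    intro α
    ext y
    simp only [Set.mem_setOf_eq, Set.mem_inter_iff]
    constructor
    · intro hy
      have hyB : y ∈ B := by
        by_contra hyB
        exact hcoe_top α (htop' y hyB ▸ hy)
      exact ⟨hyB, by rwa [hval y hyB] at hy⟩
    · rintro ⟨hyB, hyf⟩
      rwa [hval y hyB]
  have hsubh_closed : ∀ α : ℝ, IsClosed {y | h y ≤ (α:EReal)} := by
    intro α
    rw [hsubh]
    exact Metric.isClosed_closedBall.inter (hlsc.isClosed_preimage ((α:EReal)))
  have hsubh_convex : ∀ α : ℝ, Convex ℝ {y | h y ≤ (α:EReal)} := by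
    intro α
    intro a ha b hb p q hp hq hpq
    have hq1 : q = 1 - p := by linarith
    subst hq1
    exact le_trans (hqch a b p hp (by linarith)) (max_le ha hb)
  have hsubh_subset : ∀ α : ℝ, {y | h y ≤ (α:EReal)} ⊆ B := by
    intro α
    rw [hsubh]
    exact Set.inter_subset_left
  have hsubh_cpt : ∀ α : ℝ, IsCompact {y | h y ≤ (α:EReal)} :=
    fun α => IsCompact.of_isClosed_subset (isCompact_closedBall x₀ δ)
      (hsubh_closed α) (hsubh_subset α)
  have hFle : ∀ (x : Euc d) (w : Euc d), w ∈ Metric.closedBall (0:Euc d) 1 →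
      F x ≤ h (x - ε • w) := fun x w hw => iInf₂_le w hw
  have hF0 : ∀ x, 0 ≤ F x := fun x => le_iInf₂ fun w _ => hh0 _
  have hFbot : ∀ x, F x ≠ ⊥ := fun x hx => by
    have := hF0 x
    rw [hx] at this
    exact absurd this (by simp)
  have hatt : ∀ x : Euc d, ∃ w ∈ Metric.closedBall (0:Euc d) 1, F x = h (x - ε • w) := by
    intro x
    have hcl : ∀ α : ℝ, IsClosed {w : Euc d | h (x - ε • w) ≤ (α:EReal)} := by
      intro α
      have heq : {w : Euc d | h (x - ε • w) ≤ (α:EReal)}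
          = (fun w : Euc d => x - ε • w) ⁻¹' {y | h y ≤ (α:EReal)} := rfl
      rw [heq]
      exact (hsubh_closed α).preimage (continuous_const.sub (continuous_id.const_smul ε))
    obtain ⟨w, hwB, hwmin⟩ := lsc_exists_min (fun w => hh0 _) hcl
      (isCompact_closedBall _ _) Metric.isClosed_closedBall
      ⟨0, Metric.mem_closedBall_self zero_le_one⟩
    exact ⟨w, hwB, le_antisymm (hFle x w hwB) (le_iInf₂ fun w' hw' => hwmin w' hw')⟩
  have hnorm_mem : ∀ w : Euc d, w ∈ Metric.closedBall (0:Euc d) 1 →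
      ε • w ∈ Metric.closedBall (0:Euc d) ε := by
    intro w hw
    rw [mem_closedBall_zero_iff] at hw ⊢
    rw [norm_smul, Real.norm_eq_abs, abs_of_pos hε]
    nlinarith
  have hinv_mem : ∀ e : Euc d, e ∈ Metric.closedBall (0:Euc d) ε →
      ε⁻¹ • e ∈ Metric.closedBall (0:Euc d) 1 := by
    intro e he
    rw [mem_closedBall_zero_iff] at he ⊢
    rw [norm_smul, Real.norm_eq_abs, abs_of_pos (by positivity : (0:ℝ) < ε⁻¹)]
    rw [inv_mul_le_iff₀ hε]
    linarith
  have hsmul_inv : ∀ (z u : Euc d), z - ε • (ε⁻¹ • (z - u)) = u := by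
    intro z u
    rw [smul_inv_smul₀ (ne_of_gt hε)]
    abel
  have hsubF : ∀ α : ℝ, {x | F x ≤ (α:EReal)}
      = {y | h y ≤ (α:EReal)} + Metric.closedBall (0:Euc d) ε := by
    intro α
    ext x
    simp only [Set.mem_setOf_eq]
    constructor
    · intro hx
      obtain ⟨w, hwB, hwe⟩ := hatt x
      refine Set.mem_add.mpr ⟨x - ε • w, ?_, ε • w, hnorm_mem w hwB, by abel⟩
      exact le_trans (le_of_eq hwe.symm) hx
    · intro hx
      obtain ⟨u, hu, e, he, hue⟩ := Set.mem_add.mp hx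
      calc F x ≤ h (x - ε • (ε⁻¹ • e)) := hFle x _ (hinv_mem e he)
        _ = h u := by rw [show x - ε • (ε⁻¹ • e) = u by rw [smul_inv_smul₀ (ne_of_gt hε), ← hue]; abel]
        _ ≤ (α:EReal) := hu
  have hcptF : ∀ α : ℝ, IsCompact {x | F x ≤ (α:EReal)} := by
    intro α
    rw [hsubF α]
    exact (hsubh_cpt α).add (isCompact_closedBall _ _)
  have part1 : QuasiConvexE F := by
    intro a b t ht0 ht1
    obtain ⟨wa, hwa, hwae⟩ := hatt a
    obtain ⟨wb, hwb, hwbe⟩ := hatt b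
    have hwmem : t • wa + (1 - t) • wb ∈ Metric.closedBall (0:Euc d) 1 :=
      (convex_closedBall (0:Euc d) 1) hwa hwb ht0 (by linarith) (by ring)
    have hvec : (t • a + (1 - t) • b) - ε • (t • wa + (1 - t) • wb)
        = t • (a - ε • wa) + (1 - t) • (b - ε • wb) := by
      simp only [smul_add, smul_sub, smul_smul]
      rw [mul_comm ε t, mul_comm ε (1 - t)]
      abel
    calc F (t • a + (1 - t) • b) ≤ h ((t • a + (1 - t) • b) - ε • (t • wa + (1 - t) • wb)) :=
          hFle _ _ hwmem
      _ = h (t • (a - ε • wa) + (1 - t) • (b - ε • wb)) := by rw [hvec]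
      _ ≤ max (h (a - ε • wa)) (h (b - ε • wb)) := hqch _ _ t ht0 ht1
      _ = max (F a) (F b) := by rw [hwae, hwbe]
  have part2 : CoerciveE F := fun α _ => hcptF α
  have part3 : {x | F x ≠ ⊤} = B + Metric.closedBall (0:Euc d) ε := by
    ext x
    simp only [Set.mem_setOf_eq]
    constructor
    · intro hx
      obtain ⟨w, hwB, hwe⟩ := hatt x
      have huB : x - ε • w ∈ B := by
        by_contra hc
        exact hx (hwe.trans (htop' _ hc))
      exact Set.mem_add.mpr ⟨x - ε • w, huB, ε • w, hnorm_mem w hwB, by abel⟩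
    · intro hx hFtop
      obtain ⟨u, hu, e, he, hue⟩ := Set.mem_add.mp hx
      have h1 : F x ≤ h u := by
        calc F x ≤ h (x - ε • (ε⁻¹ • e)) := hFle x _ (hinv_mem e he)
          _ = h u := by rw [show x - ε • (ε⁻¹ • e) = u by rw [smul_inv_smul₀ (ne_of_gt hε), ← hue]; abel]
      rw [hFtop, top_le_iff] at h1
      exact (htop u).mp h1 hu
  have part4 : IsCompact {x | F x ≠ ⊤} := by
    rw [part3]
    exact (isCompact_closedBall _ _).add (isCompact_closedBall _ _)
  have part5 : ∀ α : ℝ, (⨅ x, F x) < (α:EReal) →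
      (interior {x | F x ≤ (α:EReal)}).Nonempty := by
    intro α hα
    obtain ⟨x₁, hx₁⟩ := iInf_lt_iff.mp hα
    obtain ⟨w, hwB, hwe⟩ := hatt x₁
    have hu : h (x₁ - ε • w) ≤ (α:EReal) := le_of_lt (hwe ▸ hx₁)
    refine ⟨x₁ - ε • w, ?_⟩
    rw [mem_interior]
    refine ⟨Metric.ball (x₁ - ε • w) ε, ?_, Metric.isOpen_ball, Metric.mem_ball_self hε⟩
    intro z hz
    have hze : z - (x₁ - ε • w) ∈ Metric.closedBall (0:Euc d) ε := by
      rw [mem_closedBall_zero_iff]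
      rw [Metric.mem_ball] at hz
      rw [← dist_eq_norm]
      exact le_of_lt hz
    show F z ≤ (α:EReal)
    calc F z ≤ h (z - ε • (ε⁻¹ • (z - (x₁ - ε • w)))) := hFle z _ (hinv_mem _ hze)
      _ = h (x₁ - ε • w) := by rw [hsmul_inv]
      _ ≤ (α:EReal) := hu
  have part6 : HypH2 F := by
    intro x hxtop hxlt
    obtain ⟨y₁, hy₁⟩ := hxlt
    obtain ⟨w₁, hw₁B, hw₁e⟩ := hatt y₁
    set a : Euc d := y₁ - ε • w₁ with ha
    have haF : h a = F y₁ := hw₁e.symm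
    have halt : h a < F x := haF ▸ hy₁
    have hatop : h a ≠ ⊤ := ne_top_of_lt halt
    have haB : a ∈ B := by
      by_contra hc
      exact hatop (htop' a hc)
    have habot : h a ≠ ⊥ := fun hc => absurd (hc ▸ hh0 a) (by simp)
    set vx : ℝ := (F x).toReal with hvx
    have hvxe : (vx : EReal) = F x := EReal.coe_toReal hxtop (hFbot x)
    set A : ℝ := (h a).toReal with hA
    have hAe : (A : EReal) = h a := EReal.coe_toReal hatop habot
    have hAvx : A < vx := by
      rw [← hvxe, ← hAe] at halt
      exact_mod_cast halt
    set α₁ : ℝ := (A + vx)/2 with hα₁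
    set γ : ℝ := (vx - A)/2 with hγ
    have hγpos : 0 < γ := by rw [hγ]; linarith
    have hAα₁ : A < α₁ := by rw [hα₁]; linarith
    have hα₁vx : α₁ < vx := by rw [hα₁]; linarith
    have hAγ : A = α₁ - γ := by rw [hα₁, hγ]; ring
    have hfa : f a = (A : EReal) := by rw [← hval a haB, hAe]
    have hxa : ε < dist x a := by
      by_contra hc
      push_neg at hc
      have hmem : x - a ∈ Metric.closedBall (0:Euc d) ε := by
        rw [mem_closedBall_zero_iff, ← dist_eq_norm]
        exact hc
      have hcon : F x ≤ h a := by
        calc F x ≤ h (x - ε • (ε⁻¹ • (x - a))) := hFle x _ (hinv_mem _ hmem)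
          _ = h a := by rw [hsmul_inv]
      exact absurd (lt_of_le_of_lt hcon halt) (lt_irrefl _)
    set σ : ℝ := (dist x a - ε)/2 with hσ
    have hσpos : 0 < σ := by rw [hσ]; linarith
    have hσe : dist x a = ε + 2*σ := by rw [hσ]; ring
    have hxdom : dist x x₀ ≤ δ + ε := by
      have hx3 : x ∈ B + Metric.closedBall (0:Euc d) ε := by rw [← part3]; exact hxtop
      obtain ⟨b, hb, e, he, hbe⟩ := Set.mem_add.mp hx3
      calc dist x x₀ = ‖(b - x₀) + e‖ := by
            rw [dist_eq_norm, show x - x₀ = (b - x₀) + e by rw [← hbe]; abel]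
        _ ≤ ‖b - x₀‖ + ‖e‖ := norm_add_le _ _
        _ ≤ δ + ε := add_le_add (by rw [← dist_eq_norm]; exact Metric.mem_closedBall.mp hb)
            (mem_closedBall_zero_iff.mp he)
    have hσδ : σ ≤ δ := by
      have h1 : dist x a ≤ dist x x₀ + dist x₀ a := dist_triangle _ _ _
      have h2 : dist x₀ a ≤ δ := by rw [dist_comm]; exact Metric.mem_closedBall.mp haB
      linarith
    have hxnot : x ∉ {z : Euc d | F z ≤ (α₁:EReal)} := by
      intro hc
      have hcc : F x ≤ (α₁:EReal) := hc
      rw [← hvxe] at hcc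
      exact absurd (by exact_mod_cast hcc) (not_le.mpr hα₁vx)
    obtain ⟨r₁, hr₁pos, hr₁⟩ :=
      Metric.isOpen_iff.mp (hcptF α₁).isClosed.isOpen_compl x hxnot
    set δ' : ℝ := min r₁ σ with hδ'
    have hδ'pos : 0 < δ' := lt_min hr₁pos hσpos
    set Cc : ℝ := 1 + 4*δ*(2*δ+1)/σ^2 with hCc
    have hCcpos : 0 < Cc := by rw [hCc]; positivity
    have hCc1 : 1 ≤ Cc := by
      rw [hCc]
      have : 0 ≤ 4*δ*(2*δ+1)/σ^2 := by positivity
      linarith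
    refine ⟨δ', hδ'pos, ENNReal.ofReal (ℓ/(2*Cc)), ?_, ?_⟩
    · rw [ENNReal.ofReal_pos]
      positivity
    intro y hyball hytop
    set vy : ℝ := (F y).toReal with hvy
    have hvye : (vy : EReal) = F y := EReal.coe_toReal hytop (hFbot y)
    have hynot : y ∉ {z : Euc d | F z ≤ (α₁:EReal)} := by
      apply hr₁
      rw [Metric.mem_ball] at hyball ⊢
      exact lt_of_lt_of_le hyball (min_le_left _ _)
    have hα₁vy : α₁ < vy := by
      by_contra hc
      push_neg at hc
      exact hynot (by
        show F y ≤ (α₁:EReal)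
        rw [← hvye]
        exact_mod_cast hc)
    obtain ⟨w₀, hw₀B, hw₀e⟩ := hatt y
    set u : Euc d := y - ε • w₀ with hu
    have huF : h u = F y := hw₀e.symm
    have hutop' : h u ≠ ⊤ := by rw [huF]; exact hytop
    have huB : u ∈ B := by
      by_contra hc
      exact hutop' (htop' u hc)
    have hfu : f u = F y := by rw [← hval u huB, huF]
    have hfu_top : f u ≠ ⊤ := by rw [hfu]; exact hytop
    have hfu_toReal : (f u).toReal = vy := by rw [hfu, hvy]
    have hdyu : dist y u ≤ ε := by
      rw [hu, dist_eq_norm, show y - (y - ε • w₀) = ε • w₀ by abel]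
      exact mem_closedBall_zero_iff.mp (hnorm_mem w₀ hw₀B)
    have hdua : σ ≤ dist u a := by
      have h1 : dist x a ≤ dist x y + dist y a := dist_triangle x y a
      have h2 : dist y a ≤ dist y u + dist u a := dist_triangle y u a
      have h3 : dist x y < δ' := by rw [dist_comm]; exact Metric.mem_ball.mp hyball
      have h4 : δ' ≤ σ := min_le_right _ _
      linarith
    have huδ : ‖u - x₀‖ ≤ δ := by rw [← dist_eq_norm]; exact Metric.mem_closedBall.mp huB
    have haδ : ‖a - x₀‖ ≤ δ := by rw [← dist_eq_norm]; exact Metric.mem_closedBall.mp haB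
    -- the frequent descent estimate
    have hfreq : ∃ᶠ z in 𝓝[≠] y, ENNReal.ofReal (ℓ/Cc)
        ≤ ENNReal.ofReal ((max (F y - F z) 0).toReal / dist y z) := by
      rw [Filter.frequently_iff]
      intro U hU
      rw [Metric.mem_nhdsWithin_iff] at hU
      obtain ⟨r, hrpos, hrsub⟩ := hU
      set η : ℝ := min (min (γ/ℓ) (σ^2/(8*δ))) (min 1 (r/(2*Cc))) with hη
      have hηpos : 0 < η := by
        apply lt_min (lt_min (by positivity) (by positivity)) (lt_min one_pos (by positivity))
      obtain ⟨w, hwd, hwne, hwtop, hwbot, hwval⟩ :=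
        mslope_descent hℓ hne_bot hfu_top (hslope u huB) η hηpos
      set s : ℝ := dist u w with hs
      have hs_pos : 0 < s := dist_pos.mpr (fun hc => hwne hc.symm)
      have hsη : s < η := by rw [hs, dist_comm]; exact hwd
      have hsγ : s < γ/ℓ := lt_of_lt_of_le hsη (le_trans (min_le_left _ _) (min_le_left _ _))
      have hs8δ : s < σ^2/(8*δ) := lt_of_lt_of_le hsη (le_trans (min_le_left _ _) (min_le_right _ _))
      have hs1 : s < 1 := lt_of_lt_of_le hsη (le_trans (min_le_right _ _) (min_le_left _ _))
      have hsr : s < r/(2*Cc) := lt_of_lt_of_le hsη (le_trans (min_le_right _ _) (min_le_right _ _))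
      set t : ℝ := 4*δ*s/σ^2 with ht
      have ht0 : 0 ≤ t := by positivity
      have h8δ : s*(8*δ) < σ^2 := (lt_div_iff₀ (by positivity)).mp hs8δ
      have ht_half : t ≤ 1/2 := by
        rw [ht, div_le_div_iff₀ (by positivity) (by norm_num : (0:ℝ) < 2)]
        linarith only [h8δ]
      have ht1 : t ≤ 1 := by linarith
      have htσ : t*σ^2 = 4*δ*s := by
        rw [ht]
        field_simp
      set q : Euc d := t • a + (1 - t) • w with hq
      have hwu : ‖w - u‖ = s := by rw [← dist_eq_norm, dist_comm]
      have hqB : q ∈ B := by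
        have hcore : ‖t • (a - x₀) + (1 - t) • (u - x₀)‖^2 ≤ δ^2 - t*(1-t)*σ^2 := by
          rw [combo_normsq]
          have h3 : σ ≤ ‖a - u‖ := by rw [← dist_eq_norm, dist_comm]; exact hdua
          have h4 : ‖a - u‖ = ‖(a - x₀) - (u - x₀)‖ := by
            congr 1
            abel
          rw [h4] at h3
          exact aux_core haδ huδ h3 ht0 ht1 (le_of_lt hσpos) (norm_nonneg _) (norm_nonneg _)
        have h14 : t*(1-t) ≤ 1/4 := by nlinarith only [sq_nonneg (t - 1/2)]
        have hσ2δ2 : σ^2 ≤ δ^2 := by nlinarith only [hσδ, hσpos]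
        have h5 : t*(1-t)*σ^2 ≤ δ^2 := by
          have e := mul_le_mul_of_nonneg_right h14 (sq_nonneg σ)
          linarith only [e, hσ2δ2, sq_nonneg σ, sq_nonneg δ]
        have hrhs0 : 0 ≤ δ - t*(1-t)*σ^2/(2*δ) := by
          rw [sub_nonneg, div_le_iff₀ (by positivity : (0:ℝ) < 2*δ)]
          nlinarith only [h5, sq_nonneg δ, hδ]
        have hsqrt : ‖t • (a - x₀) + (1 - t) • (u - x₀)‖ ≤ δ - t*(1-t)*σ^2/(2*δ) :=
          aux_sqrt (norm_nonneg _) hcore hδ hrhs0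
        have hdecomp : q - x₀ = (t • (a - x₀) + (1 - t) • (u - x₀)) + (1 - t) • (w - u) := by
          rw [hq]
          module
        have hq_x₀ : ‖q - x₀‖ ≤ δ := by
          have hn2 : ‖(1 - t) • (w - u)‖ = (1-t)*s := by
            rw [norm_smul, Real.norm_eq_abs, abs_of_nonneg (by linarith : (0:ℝ) ≤ 1 - t), hwu]
          have htri : ‖q - x₀‖ ≤ ‖t • (a - x₀) + (1 - t) • (u - x₀)‖ + ‖(1 - t) • (w - u)‖ := by
            rw [hdecomp]
            exact norm_add_le _ _
          rw [hn2] at htri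
          have hkey : t*(1-t)*σ^2/(2*δ) = 2*s*(1-t) := by
            rw [div_eq_iff (by positivity : (2*δ:ℝ) ≠ 0)]
            linear_combination (1-t)*htσ
          have hst : 0 ≤ s*(1-t) := mul_nonneg (le_of_lt hs_pos) (by linarith only [ht1])
          linarith only [htri, hsqrt, hkey, hst]
        show q ∈ Metric.closedBall x₀ δ
        rw [Metric.mem_closedBall, dist_eq_norm]
        exact hq_x₀
      have hfq : f q ≤ max (f a) (f w) := hqc a w t ht0 ht1
      set vw : ℝ := (f w).toReal with hvw
      have hvwe : (vw:EReal) = f w := EReal.coe_toReal hwtop hwbot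
      have hℓsγ : ℓ * s < γ := by
        calc ℓ*s < ℓ*(γ/ℓ) := mul_lt_mul_of_pos_left hsγ hℓ
          _ = γ := by field_simp
      have hfa_le : f a ≤ ((vy - ℓ*s : ℝ) : EReal) := by
        rw [hfa]
        exact_mod_cast (by linarith : A ≤ vy - ℓ*s)
      have hfw_le : f w ≤ ((vy - ℓ*s : ℝ) : EReal) := by
        rw [← hvwe]
        have hlt : vw < vy - ℓ*s := by
          rw [← hfu_toReal]
          linarith [hwval]
        exact_mod_cast le_of_lt hlt
      have hfqle : f q ≤ ((vy - ℓ*s : ℝ):EReal) := le_trans hfq (max_le hfa_le hfw_le)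
      set z : Euc d := y + (q - u) with hz
      have hzF : F z ≤ ((vy - ℓ*s : ℝ):EReal) := by
        have hzw : z - ε • w₀ = q := by
          rw [hz, hu]
          abel
        calc F z ≤ h (z - ε • w₀) := hFle z w₀ hw₀B
          _ = h q := by rw [hzw]
          _ = f q := hval q hqB
          _ ≤ _ := hfqle
      have hdzy : dist z y = ‖q - u‖ := by
        rw [dist_eq_norm, hz, show y + (q - u) - y = q - u by abel]
      have hquC : ‖q - u‖ ≤ Cc * s := by
        have hdecomp2 : q - u = t • (a - w) + (w - u) := by
          rw [hq]
          module
        have h1 : ‖a - w‖ ≤ 2*δ + 1 := by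
          have he1 : a - w = (a - x₀) - (u - x₀) - (w - u) := by abel
          rw [he1]
          calc ‖(a - x₀) - (u - x₀) - (w - u)‖
              ≤ ‖(a - x₀) - (u - x₀)‖ + ‖w - u‖ := norm_sub_le _ _
            _ ≤ (‖a - x₀‖ + ‖u - x₀‖) + s := by
                rw [hwu]
                gcongr
                exact norm_sub_le _ _
            _ ≤ 2*δ + 1 := by linarith
        calc ‖q - u‖ ≤ ‖t • (a - w)‖ + ‖w - u‖ := by
              rw [hdecomp2]
              exact norm_add_le _ _
          _ = t*‖a - w‖ + s := by rw [norm_smul, Real.norm_eq_abs, abs_of_nonneg ht0, hwu]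
          _ ≤ t*(2*δ+1) + s := by
              have := mul_le_mul_of_nonneg_left h1 ht0
              linarith only [this]
          _ = Cc*s := by
              rw [hCc, ht]
              field_simp
              ring
      have hqune : q ≠ u := by
        intro hc
        have h1 : f q ≤ ((vy - ℓ*s : ℝ):EReal) := hfqle
        rw [hc, hfu, ← hvye] at h1
        have h2 : vy ≤ vy - ℓ*s := by exact_mod_cast h1
        nlinarith only [h2, hℓ, hs_pos]
      have hzyne : z ≠ y := by
        intro hc
        rw [hz] at hc
        have h1 : q - u = 0 := by
          have h2 := hc
          rw [add_eq_left] at h2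
          exact h2
        exact hqune (sub_eq_zero.mp h1)
      have hdzy_lt : dist z y < r := by
        rw [hdzy]
        calc ‖q - u‖ ≤ Cc*s := hquC
          _ < Cc*(r/(2*Cc)) := mul_lt_mul_of_pos_left hsr hCcpos
          _ = r/2 := by
              field_simp
          _ < r := by linarith
      refine ⟨z, hrsub ⟨Metric.mem_ball.mpr hdzy_lt, by simpa using hzyne⟩, ?_⟩
      have hFztop : F z ≠ ⊤ := by
        intro hc
        rw [hc] at hzF
        exact hcoe_top _ hzF
      set vz : ℝ := (F z).toReal with hvz
      have hvze : (vz:EReal) = F z := EReal.coe_toReal hFztop (hFbot z)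
      have hvz_le : vz ≤ vy - ℓ*s := by
        rw [← hvze] at hzF
        exact_mod_cast hzF
      have hsubze : F y - F z = ((vy - vz : ℝ):EReal) := by
        rw [← hvye, ← hvze]
        exact (EReal.coe_sub _ _).symm
      have hvydiff : (0:ℝ) ≤ vy - vz := by nlinarith only [hvz_le, hℓ, hs_pos]
      have hmax : (max (F y - F z) 0).toReal = vy - vz := by
        rw [hsubze, max_eq_left (by exact_mod_cast hvydiff : (0:EReal) ≤ ((vy - vz : ℝ):EReal))]
        exact EReal.toReal_coe _
      rw [hmax]
      apply ENNReal.ofReal_le_ofReal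
      have hdist_pos : 0 < dist y z := by
        rw [dist_comm]
        exact dist_pos.mpr hzyne
      have hdist_le : dist y z ≤ Cc * s := by
        rw [dist_comm, hdzy]
        exact hquC
      calc ℓ/Cc = (ℓ*s)/(Cc*s) := by
            rw [mul_div_mul_right _ _ (ne_of_gt hs_pos)]
        _ ≤ (vy - vz)/(dist y z) := by
            apply div_le_div₀ hvydiff ?_ hdist_pos hdist_le
            nlinarith only [hvz_le, hℓ, hs_pos]
    have hge : ENNReal.ofReal (ℓ/Cc) ≤ mslope F y := by
      unfold mslope
      rw [if_neg hytop]
      exact Filter.le_limsup_of_frequently_le' hfreq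
    refine lt_of_lt_of_le ?_ hge
    rw [ENNReal.ofReal_lt_ofReal_iff (by positivity)]
    apply div_lt_div_of_pos_left hℓ hCcpos
    linarith
  have hunit : ∀ (p q : Euc d), p ≠ q → ‖‖p - q‖⁻¹ • (p - q)‖ = 1 := by
    intro p q hpq
    have hnz : ‖p - q‖ ≠ 0 := by
      simp only [ne_eq, norm_eq_zero, sub_eq_zero]
      exact hpq
    rw [norm_smul, norm_inv, norm_norm]
    field_simp
  have part7 : ∀ β : ℝ, (⨅ x, F x) < (β:EReal) → (β:EReal) < (⨆ x, F x) →
      ProxRegularWith ε (interior {x | F x ≤ (β:EReal)})ᶜ := by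
    intro β hβlow _hβhigh
    set C : Set (Euc d) := {y | h y ≤ (β:EReal)} with hCdef
    have hCne : C.Nonempty := by
      obtain ⟨x₁, hx₁⟩ := iInf_lt_iff.mp hβlow
      obtain ⟨w, hwB, hwe⟩ := hatt x₁
      exact ⟨x₁ - ε • w, le_of_lt (hwe ▸ hx₁)⟩
    have hCcl : IsClosed C := hsubh_closed β
    have hCcv : Convex ℝ C := hsubh_convex β
    have hKd : ∀ z : Euc d, F z ≤ (β:EReal) ↔ Metric.infDist z C ≤ ε := by
      intro z
      constructor
      · intro hz
        have hzmem : z ∈ {y | h y ≤ (β:EReal)} + Metric.closedBall (0:Euc d) ε := by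
          rw [← hsubF β]; exact hz
        obtain ⟨u, hu, e, he, hue⟩ := Set.mem_add.mp hzmem
        calc Metric.infDist z C ≤ dist z u := Metric.infDist_le_dist_of_mem hu
          _ ≤ ε := by
              rw [dist_eq_norm, show z - u = e by rw [← hue]; abel]
              exact mem_closedBall_zero_iff.mp he
      · intro hz
        obtain ⟨c, hcC, hcd⟩ := hCcl.exists_infDist_eq_dist hCne z
        have hzc : z - c ∈ Metric.closedBall (0:Euc d) ε := by
          rw [mem_closedBall_zero_iff, ← dist_eq_norm, ← hcd]
          exact hz
        calc F z ≤ h (z - ε • (ε⁻¹ • (z - c))) := hFle z _ (hinv_mem _ hzc)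
          _ = h c := by rw [hsmul_inv]
          _ ≤ (β:EReal) := hcC
    have hIntK : interior {z | F z ≤ (β:EReal)} = {z | Metric.infDist z C < ε} := by
      apply Set.Subset.antisymm
      · intro z hz
        have hzK : z ∈ {z : Euc d | F z ≤ (β:EReal)} := interior_subset hz
        have hle : Metric.infDist z C ≤ ε := (hKd z).mp hzK
        rcases lt_or_eq_of_le hle with hlt | heq
        · exact hlt
        · exfalso
          obtain ⟨r, hr, hball⟩ := Metric.isOpen_iff.mp isOpen_interior z hz
          obtain ⟨c, hcC, hcd⟩ := hCcl.exists_infDist_eq_dist hCne z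
          have hdzc : dist z c = ε := by rw [← hcd, heq]
          have hzc : z ≠ c := by
            intro hzc
            rw [hzc, dist_self] at hdzc
            linarith
          have hmin : ∀ c' ∈ C, dist z c ≤ dist z c' := fun c' hc' => by
            rw [← hcd]; exact Metric.infDist_le_dist_of_mem hc'
          set z' : Euc d := z + (r/2) • (‖z - c‖⁻¹ • (z - c)) with hz'
          have hray := ray_dist_lower hCcv hcC hmin hzc
            (le_of_lt (by positivity : (0:ℝ) < r/2))
          have hzz' : dist z' z < r := by
            rw [dist_eq_norm, show z' - z = (r/2) • (‖z - c‖⁻¹ • (z - c)) by rw [hz']; abel,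
              norm_smul, hunit z c hzc, Real.norm_eq_abs,
              abs_of_pos (by positivity : (0:ℝ) < r/2)]
            linarith
          have hz'mem : z' ∈ {z : Euc d | F z ≤ (β:EReal)} := interior_subset (hball (Metric.mem_ball.mpr hzz'))
          have hz'le : Metric.infDist z' C ≤ ε := (hKd z').mp hz'mem
          obtain ⟨c'', hc''C, hc''d⟩ := hCcl.exists_infDist_eq_dist hCne z'
          have := hray c'' hc''C
          rw [← hc''d] at this
          rw [hdzc] at this
          linarith
      · intro z hz
        have hop : IsOpen {z : Euc d | Metric.infDist z C < ε} :=
          isOpen_lt (Metric.continuous_infDist_pt (s := C)) continuous_const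
        exact interior_maximal (fun z' hz' => (hKd z').mpr (le_of_lt hz')) hop hz
    intro u h0 hltε
    rw [hIntK] at h0 hltε ⊢
    set S : Set (Euc d) := {z : Euc d | Metric.infDist z C < ε}ᶜ with hSdef
    have hS : ∀ z, z ∈ S ↔ ε ≤ Metric.infDist z C := by
      intro z
      simp only [hSdef, Set.mem_compl_iff, Set.mem_setOf_eq, not_lt]
    have hScl : IsClosed S :=
      (isOpen_lt (Metric.continuous_infDist_pt (s := C)) continuous_const).isClosed_compl
    have hSne : S.Nonempty := by
      by_contra hne
      rw [Set.not_nonempty_iff_eq_empty] at hne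
      rw [hne, Metric.infDist_empty] at h0
      exact lt_irrefl 0 h0
    set ρ : ℝ := Metric.infDist u S with hρ
    obtain ⟨y₀, hy₀S, hy₀d⟩ := hScl.exists_infDist_eq_dist hSne u
    obtain ⟨c, hcC, hcd⟩ := hCcl.exists_infDist_eq_dist hCne u
    have hmin : ∀ c' ∈ C, dist u c ≤ dist u c' := fun c' hc' => by
      rw [← hcd]; exact Metric.infDist_le_dist_of_mem hc'
    have hstep1 : dist u c ≤ ε - ρ := by
      have hkey : ∀ t : ℝ, 0 ≤ t → t < ρ → dist u c + t < ε := by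
        intro t ht0 htρ
        by_cases huc : u = c
        · have hucd : dist u c = 0 := by rw [huc, dist_self]
          rw [hucd, zero_add]
          linarith
        · set u' : Euc d := u + t • (‖u - c‖⁻¹ • (u - c)) with hu'
          have hdu' : dist u u' = t := by
            rw [dist_comm, dist_eq_norm, show u' - u = t • (‖u - c‖⁻¹ • (u - c)) by rw [hu']; abel,
              norm_smul, hunit u c huc, Real.norm_eq_abs, abs_of_nonneg ht0]
            ring
          have hu'S : u' ∉ S := by
            intro hc'
            have h1 : ρ ≤ dist u u' := Metric.infDist_le_dist_of_mem hc'
            rw [hdu'] at h1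
            linarith
          rw [hS] at hu'S
          push_neg at hu'S
          have hray := ray_dist_lower hCcv hcC hmin huc ht0
          obtain ⟨c'', hc''C, hc''d⟩ := hCcl.exists_infDist_eq_dist hCne u'
          have h2 := hray c'' hc''C
          rw [← hc''d] at h2
          linarith
      by_contra hcon
      push_neg at hcon
      have ht1 : dist u c < ε := by
        have := hkey 0 le_rfl h0
        simpa using this
      have h2 := hkey (ε - dist u c) (by linarith) (by linarith)
      linarith
    have hεmρ : (0:ℝ) < ε - ρ := by linarith
    have hform : ∀ y, y ∈ S → dist u y = ρ → y = u + (ρ / (ε - ρ)) • (u - c) := by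
      intro y hyS hyd
      have hyC : ε ≤ Metric.infDist y C := (hS y).mp hyS
      have h1 : ε ≤ dist y c := le_trans hyC (Metric.infDist_le_dist_of_mem hcC)
      have h2 : dist y c ≤ dist y u + dist u c := dist_triangle y u c
      have h3 : dist y u = ρ := by rw [dist_comm]; exact hyd
      have h4 : dist y c = ε := le_antisymm (by linarith) h1
      have h5 : dist u c = ε - ρ := by linarith
      have hnorm1 : ‖y - u‖ = ρ := by rw [← dist_eq_norm]; exact h3
      have hnorm2 : ‖u - c‖ = ε - ρ := by rw [← dist_eq_norm]; exact h5
      have hnorm3 : ‖(y - u) + (u - c)‖ = ‖y - u‖ + ‖u - c‖ := by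
        rw [show (y - u) + (u - c) = y - c by abel, ← dist_eq_norm, h4, hnorm1, hnorm2]
        ring
      have hsr : SameRay ℝ (y - u) (u - c) := sameRay_iff_norm_add.mpr hnorm3
      have hsm := hsr.norm_smul_eq
      rw [hnorm1, hnorm2] at hsm
      have hyu : y - u = (ρ / (ε - ρ)) • (u - c) := by
        calc y - u = ((ε - ρ)⁻¹ * (ε - ρ)) • (y - u) := by
              rw [inv_mul_cancel₀ (ne_of_gt hεmρ), one_smul]
          _ = (ε - ρ)⁻¹ • ((ε - ρ) • (y - u)) := by rw [smul_smul]
          _ = (ε - ρ)⁻¹ • (ρ • (u - c)) := by rw [← hsm]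
          _ = (ρ / (ε - ρ)) • (u - c) := by
              rw [smul_smul]
              congr 1
              field_simp
      have := sub_eq_iff_eq_add.mp hyu
      rw [this]
      abel
    have hy₀ρ : dist u y₀ = ρ := (hρ.trans hy₀d).symm
    refine ⟨y₀, ⟨hy₀S, hy₀ρ⟩, ?_⟩
    rintro y ⟨hyS, hyd⟩
    rw [hform y hyS hyd, hform y₀ hy₀S hy₀ρ]
  exact ⟨part1, part2, part3, part4, part5, part6, part7⟩

end
end
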